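/- arXiv:1511.04069 — 13 statements merged into one kernel-verified Lean document; each statement's English description precedes it below -/
import Mathlib

section
/- Let (M,d) be a metric space and T : M → M a surjective mapping such that inf over n of sup over x in M of d(T^{n+1}x, T^n x) equals 0. Then T is the identity mapping on M. -/
open Function Set Filter Topology

/-- A surjective mapping on a metric space with
`inf_n sup_x d(T^{n+1}x, T^n x) = 0` is the identity. -/
theorem stmt0 {M : Type*} [MetricSpace M] (T : M → M)
    (hsurj : Function.Surjective T)
    (h : ⨅ n : ℕ, ⨆ x : M, edist (T^[n + 1] x) (T^[n] x) = 0) :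
    T = id := by
  have hs : ∀ n : ℕ, Function.Surjective (T^[n]) := fun n => hsurj.iterate n
  have key : ∀ n : ℕ, (⨆ x : M, edist (T^[n + 1] x) (T^[n] x))
      = ⨆ y : M, edist (T y) y := by
    intro n
    calc (⨆ x : M, edist (T^[n + 1] x) (T^[n] x))
        = ⨆ x : M, (fun y => edist (T y) y) (T^[n] x) := by
          simp [Function.iterate_succ_apply']
      _ = ⨆ y : M, edist (T y) y := (hs n).iSup_comp fun y => edist (T y) y
  simp only [key, iInf_const] at h
  funext x
  have hx : edist (T x) x ≤ 0 := h ▸ le_iSup (fun y => edist (T y) y) x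
  simpa [edist_eq_zero] using le_antisymm hx zero_le
end

section
/- Let (M,d) be a metric space and T : M → M a surjective uniformly asymptotically regular mapping. Then T is the identity on M. -/
open Function Set Filter Topology

/-- A surjective uniformly asymptotically regular mapping on a metric space
is the identity. -/
theorem stmt1 {M : Type*} [MetricSpace M] (T : M → M)
    (hsurj : Function.Surjective T)
    (hUAR : Tendsto (fun n : ℕ => ⨆ x : M, edist (T^[n + 1] x) (T^[n] x))
      atTop (𝓝 0)) :
    T = id := by
  have hiter : ∀ n : ℕ, Function.Surjective (T^[n]) := fun n => hsurj.iterate n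
  have hconst : (fun n : ℕ => ⨆ x : M, edist (T^[n + 1] x) (T^[n] x))
      = fun _ : ℕ => ⨆ y : M, edist (T y) y := by
    funext n
    have := (hiter n).iSup_comp (g := fun y => edist (T y) y)
    simpa [Function.iterate_succ_apply'] using this
  rw [hconst] at hUAR
  have hs : (⨆ y : M, edist (T y) y) = 0 :=
    tendsto_nhds_unique tendsto_const_nhds hUAR
  funext x
  have hx : edist (T x) x ≤ 0 := hs ▸ le_iSup (fun y => edist (T y) y) x
  simpa [edist_eq_zero] using le_antisymm hx zero_le
end

section
/- Let T : M → M be a uniformly asymptotically regular mapping on a metric space M. If there exists a nonempty subset D ⊆ M with T(D) = D, then every point of D is a fixed point of T; in particular, the fixed point set of T is nonempty. -/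
open Function Set Filter Topology

/-- If `T` is uniformly asymptotically regular on a metric space `M` and
`T(D) = D` for some nonempty `D ⊆ M`, then `D ⊆ Fix T`; in particular the
fixed point set of `T` is nonempty. -/
theorem stmt3 {M : Type*} [MetricSpace M] (T : M → M)
    (hUAR : Tendsto (fun n : ℕ => ⨆ x : M, edist (T^[n + 1] x) (T^[n] x))
      atTop (𝓝 0))
    (D : Set M) (hD : D.Nonempty) (hTD : T '' D = D) :
    D ⊆ Function.fixedPoints T ∧ (Function.fixedPoints T).Nonempty := by
  have hsub : D ⊆ Function.fixedPoints T := by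
    intro x hx
    have hpre : ∀ n : ℕ, ∃ y ∈ D, T^[n] y = x := by
      intro n
      induction n with
      | zero => exact ⟨x, hx, rfl⟩
      | succ n ih =>
        obtain ⟨y, hy, hyx⟩ := ih
        have : y ∈ T '' D := hTD.symm ▸ hy
        obtain ⟨z, hz, hzy⟩ := this
        exact ⟨z, hz, by rw [Function.iterate_succ_apply, hzy, hyx]⟩
    have hle : ∀ n : ℕ, edist (T x) x ≤ ⨆ x : M, edist (T^[n + 1] x) (T^[n] x) := by
      intro n
      obtain ⟨y, _, hyx⟩ := hpre n
      have h1 : T^[n + 1] y = T x := by rw [Function.iterate_succ_apply', hyx]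
      calc edist (T x) x = edist (T^[n + 1] y) (T^[n] y) := by rw [h1, hyx]
        _ ≤ ⨆ x : M, edist (T^[n + 1] x) (T^[n] x) := le_iSup (fun x => edist (T^[n + 1] x) (T^[n] x)) y
    have h0 : edist (T x) x ≤ 0 :=
      le_of_tendsto_of_tendsto tendsto_const_nhds hUAR (Eventually.of_forall hle)
    have : edist (T x) x = 0 := le_antisymm h0 zero_le
    exact edist_eq_zero.mp this
  obtain ⟨x, hx⟩ := hD
  exact ⟨hsub, ⟨x, hsub hx⟩⟩
end

section
/- Let C be a bounded subset of a Banach space E and T : C → C a firmly nonexpansive mapping. Then T is uniformly asymptotically regular, i.e., lim_{n→∞} sup_{x∈C} ‖T^{n+1}x − T^n x‖ = 0. -/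
open Function Set Filter Topology

section auxlemmas

variable {E : Type*} [NormedAddCommGroup E] [NormedSpace ℝ E]

private lemma firm_mid {C : Set E} {T : E → E}
    (hfne : ∀ x ∈ C, ∀ y ∈ C, ∀ α ∈ Set.Ioo (0 : ℝ) 1,
      ‖T x - T y‖ ≤ ‖α • (x - y) + (1 - α) • (T x - T y)‖)
    {p q : E} (hp : p ∈ C) (hq : q ∈ C) :
    2 * ‖T p - T q‖ ≤ ‖(p - q) + (T p - T q)‖ := by
  have h := hfne p hp q hq (1/2) ⟨by norm_num, by norm_num⟩
  have e2 : (1:ℝ) - 1/2 = 1/2 := by norm_num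
  rw [e2, ← smul_add, norm_smul, Real.norm_eq_abs,
    abs_of_pos (by norm_num : (0:ℝ) < 1/2)] at h
  linarith

private lemma tele (z : ℕ → E) (a m : ℕ) :
    ‖z a - z (a + m)‖ ≤ ∑ i ∈ Finset.range m, ‖z (a + i) - z (a + i + 1)‖ := by
  induction m with
  | zero => simp
  | succ p ih =>
      have h1 : z a - z (a + (p+1)) = (z a - z (a + p)) + (z (a + p) - z (a + p + 1)) := by
        have e : a + (p+1) = a + p + 1 := rfl
        rw [e]; abel
      rw [Finset.sum_range_succ, h1]
      exact le_trans (norm_add_le _ _) (add_le_add_left ih _)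

/-- The key window lemma: on a window where the displacement norm drops by at most δ,
chords grow linearly. -/
private lemma claim (z : ℕ → E)
    (HF : ∀ k l, 2 * ‖z (k+1) - z (l+1)‖ ≤ ‖(z k - z l) + (z (k+1) - z (l+1))‖)
    (k₀ n₀ : ℕ) (δ : ℝ) (hδ : 0 ≤ δ)
    (hwin : ‖z k₀ - z (k₀+1)‖ ≤ ‖z (k₀+n₀) - z (k₀+n₀+1)‖ + δ) :
    ∀ n, 1 ≤ n → ∀ k, k₀ ≤ k → k + n ≤ k₀ + n₀ →
      (n:ℝ) * ‖z (k₀+n₀) - z (k₀+n₀+1)‖ - ((n:ℝ) * 2^n) * δ ≤ ‖z k - z (k+n)‖ := by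
  -- displacement is nonincreasing
  have HR : ∀ k, ‖z (k+1) - z (k+1+1)‖ ≤ ‖z k - z (k+1)‖ := by
    intro k
    have h := HF k (k+1)
    have h2 := norm_add_le (z k - z (k+1)) (z (k+1) - z (k+1+1))
    linarith
  have Ranti : ∀ a b : ℕ, a ≤ b → ‖z b - z (b+1)‖ ≤ ‖z a - z (a+1)‖ :=
    fun a b h => (antitone_nat_of_succ_le (f := fun k => ‖z k - z (k+1)‖) HR) h
  set ρ : ℝ := ‖z (k₀+n₀) - z (k₀+n₀+1)‖ with hρdef
  have hρ0 : 0 ≤ ρ := norm_nonneg _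
  have hub : ∀ i, k₀ ≤ i → ‖z i - z (i+1)‖ ≤ ρ + δ :=
    fun i hi => le_trans (Ranti k₀ i hi) hwin
  have hlb : ∀ k, k ≤ k₀ + n₀ → ρ ≤ ‖z k - z (k+1)‖ := fun k hk => Ranti k _ hk
  -- the one-step recursion
  have HS : ∀ k p, 2 * ‖z (k+1) - z (k+p+1+1)‖ ≤
      ‖z k - z (k+p+1+1)‖ + ∑ i ∈ Finset.range p, ‖z (k+1+i) - z (k+1+i+1)‖ := by
    intro k p
    have hf := HF k (k+p+1)
    have hid : (z k - z (k+p+1)) + (z (k+1) - z (k+p+1+1))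
        = (z k - z (k+p+1+1)) + (z (k+1) - z (k+p+1)) := by abel
    rw [hid] at hf
    have htri := norm_add_le (z k - z (k+p+1+1)) (z (k+1) - z (k+p+1))
    have htel := tele z (k+1) p
    have he : k+1+p = k+p+1 := by omega
    rw [he] at htel
    linarith
  intro n hn
  induction n, hn using Nat.le_induction with
  | base =>
      intro k hk hkn
      have h1 := hlb k (by omega)
      push_cast
      norm_num
      linarith
  | succ n hn ih =>
      intro k hk hkn
      obtain ⟨p, rfl⟩ : ∃ p, n = p + 1 := ⟨n - 1, by omega⟩
      have hIH := ih (k+1) (by omega) (by omega)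
      have e1 : k+1+(p+1) = k+p+1+1 := by omega
      rw [e1] at hIH
      have hstep := HS k p
      have hsum : ∑ i ∈ Finset.range p, ‖z (k+1+i) - z (k+1+i+1)‖ ≤ (p:ℝ) * ρ + (p:ℝ) * δ := by
        have h := Finset.sum_le_card_nsmul (Finset.range p)
          (fun i => ‖z (k+1+i) - z (k+1+i+1)‖) (ρ + δ)
          (fun i _ => hub (k+1+i) (by omega))
        have e : ((Finset.range p).card : ℝ) * (ρ + δ) = (p:ℝ) * ρ + (p:ℝ) * δ := by
          simp [Finset.card_range]; ring
        calc ∑ i ∈ Finset.range p, ‖z (k+1+i) - z (k+1+i+1)‖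
            ≤ ((Finset.range p).card : ℕ) • (ρ + δ) := h
          _ = (p:ℝ) * ρ + (p:ℝ) * δ := by rw [nsmul_eq_mul]; exact e
      have e2 : k+(p+1+1) = k+p+1+1 := by omega
      rw [e2]
      have hQ : (0:ℝ) ≤ 2^p := by positivity
      have hpQ : (p:ℝ) ≤ 2^p := by
        exact_mod_cast (Nat.lt_two_pow_self (n := p)).le
      have h4 : 0 ≤ (4 * (2:ℝ)^p - p) * δ := mul_nonneg (by linarith) hδ
      push_cast at hIH ⊢
      simp only [pow_succ] at hIH ⊢
      nlinarith [hstep, hIH, hsum, h4, hρ0, hδ]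

private lemma seq_est (z : ℕ → E) (D : ℝ)
    (HF : ∀ k l, 2 * ‖z (k+1) - z (l+1)‖ ≤ ‖(z k - z l) + (z (k+1) - z (l+1))‖)
    (HB : ∀ k l, ‖z k - z l‖ ≤ D)
    (n₀ : ℕ) (hn₀ : 1 ≤ n₀) (δ : ℝ) (hδ : 0 < δ) (M : ℕ)
    (hMδ : D + 1 ≤ (M:ℝ) * δ) (hAδ : ((n₀:ℝ) * 2^n₀) * δ ≤ 1) :
    ∀ m, M * n₀ ≤ m → (n₀:ℝ) * ‖z m - z (m+1)‖ ≤ D + 1 := by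
  have HR : ∀ k, ‖z (k+1) - z (k+1+1)‖ ≤ ‖z k - z (k+1)‖ := by
    intro k
    have h := HF k (k+1)
    have h2 := norm_add_le (z k - z (k+1)) (z (k+1) - z (k+1+1))
    linarith
  have Ranti : ∀ a b : ℕ, a ≤ b → ‖z b - z (b+1)‖ ≤ ‖z a - z (a+1)‖ :=
    fun a b h => (antitone_nat_of_succ_le (f := fun k => ‖z k - z (k+1)‖) HR) h
  -- pigeonhole: some window of length n₀ has displacement drop ≤ δ
  have pig : ∃ j, j < M ∧
      ‖z (j*n₀) - z (j*n₀+1)‖ ≤ ‖z (j*n₀+n₀) - z (j*n₀+n₀+1)‖ + δ := by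
    by_contra hcon
    push_neg at hcon
    have chain : ∀ j, j ≤ M → (j:ℝ) * δ + ‖z (j*n₀) - z (j*n₀+1)‖ ≤ ‖z 0 - z (0+1)‖ := by
      intro j
      induction j with
      | zero => intro _; simp
      | succ j ih =>
          intro hj
          have h1 := ih (by omega)
          have h2 := hcon j (by omega)
          have e : (j+1)*n₀ = j*n₀+n₀ := by ring
          rw [e]
          push_cast
          linarith
    have hfin := chain M le_rfl
    have hb := HB 0 (0+1)
    have hnn := norm_nonneg (z (M*n₀) - z (M*n₀+1))
    linarith
  obtain ⟨j, hj, hwin⟩ := pig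
  have hcl := claim z HF (j*n₀) n₀ δ hδ.le hwin n₀ hn₀ (j*n₀) le_rfl le_rfl
  have hD := HB (j*n₀) (j*n₀+n₀)
  have hρ' : (n₀:ℝ) * ‖z (j*n₀+n₀) - z (j*n₀+n₀+1)‖ ≤ D + 1 := by linarith
  intro m hm
  have hle : j*n₀+n₀ ≤ m := by
    refine le_trans ?_ hm
    calc j*n₀+n₀ = (j+1)*n₀ := by ring
      _ ≤ M*n₀ := mul_le_mul_left (by omega) n₀
  have hmono := Ranti _ _ hle
  have hn₀0 : (0:ℝ) ≤ (n₀:ℝ) := Nat.cast_nonneg _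
  calc (n₀:ℝ) * ‖z m - z (m+1)‖
      ≤ (n₀:ℝ) * ‖z (j*n₀+n₀) - z (j*n₀+n₀+1)‖ :=
        mul_le_mul_of_nonneg_left hmono hn₀0
    _ ≤ D + 1 := hρ'

end auxlemmas

/-- A firmly nonexpansive self-mapping of a bounded subset of a Banach space
is uniformly asymptotically regular. -/
theorem stmt4 {E : Type*} [NormedAddCommGroup E] [NormedSpace ℝ E]
    [CompleteSpace E] (C : Set E) (hC : Bornology.IsBounded C)
    (T : E → E) (hTC : Set.MapsTo T C C)
    (hfne : ∀ x ∈ C, ∀ y ∈ C, ∀ α ∈ Set.Ioo (0 : ℝ) 1,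
      ‖T x - T y‖ ≤ ‖α • (x - y) + (1 - α) • (T x - T y)‖) :
    Tendsto (fun n : ℕ => ⨆ x : C, ‖T^[n + 1] (x : E) - T^[n] (x : E)‖)
      atTop (𝓝 0) := by
  obtain ⟨B, hB⟩ := Metric.isBounded_iff.1 hC
  set D : ℝ := max B 0 with hDdef
  have hD0 : 0 ≤ D := le_max_right _ _
  have hDbd : ∀ p ∈ C, ∀ q ∈ C, ‖p - q‖ ≤ D := by
    intro p hp q hq
    rw [← dist_eq_norm]
    exact le_trans (hB hp hq) (le_max_left _ _)
  rw [Metric.tendsto_atTop]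
  intro ε hε
  set n₀ : ℕ := ⌈(D+1)/ε⌉₊ + 1 with hn₀def
  have hn₀1 : 1 ≤ n₀ := by omega
  have hn₀pos : (0:ℝ) < (n₀:ℝ) := by
    exact_mod_cast Nat.succ_le_of_lt (by omega : 0 < n₀)
  set A : ℝ := (n₀:ℝ) * 2^n₀ with hAdef
  have hA0 : 0 ≤ A := by positivity
  set δ : ℝ := 1/(A+1) with hδdef
  have hδ0 : 0 < δ := by positivity
  set M : ℕ := ⌈(D+1)*(A+1)⌉₊ with hMdef
  have hMδ : D + 1 ≤ (M:ℝ) * δ := by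
    rw [hδdef, mul_one_div, le_div_iff₀ (by positivity : (0:ℝ) < A + 1)]
    exact Nat.le_ceil _
  have hAδ : A * δ ≤ 1 := by
    rw [hδdef, mul_one_div]
    exact div_le_one_of_le₀ (by linarith) (by positivity)
  refine ⟨M * n₀, fun m hm => ?_⟩
  -- uniform displacement bound
  have key : ∀ x ∈ C, ‖T^[m] x - T^[m+1] x‖ ≤ (D+1)/(n₀:ℝ) := by
    intro x hx
    have hmem : ∀ k, T^[k] x ∈ C := fun k => hTC.iterate k hx
    have HF : ∀ k l, 2 * ‖T^[k+1] x - T^[l+1] x‖ ≤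
        ‖(T^[k] x - T^[l] x) + (T^[k+1] x - T^[l+1] x)‖ := by
      intro k l
      have h := firm_mid hfne (hmem k) (hmem l)
      rwa [← Function.iterate_succ_apply' T k x, ← Function.iterate_succ_apply' T l x] at h
    have HB : ∀ k l, ‖T^[k] x - T^[l] x‖ ≤ D := fun k l => hDbd _ (hmem k) _ (hmem l)
    have hest := seq_est (fun k => T^[k] x) D HF HB n₀ hn₀1 δ hδ0 M hMδ hAδ m hm
    rw [le_div_iff₀ hn₀pos]
    calc ‖T^[m] x - T^[m+1] x‖ * (n₀:ℝ) = (n₀:ℝ) * ‖T^[m] x - T^[m+1] x‖ := by ring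
      _ ≤ D + 1 := hest
  -- (D+1)/n₀ < ε
  have hlt : (D+1)/(n₀:ℝ) < ε := by
    have h1 : (D+1)/ε < (n₀:ℝ) := by
      have h2 := Nat.le_ceil ((D+1)/ε)
      have h3 : ((⌈(D+1)/ε⌉₊ : ℕ):ℝ) < (n₀:ℝ) := by
        exact_mod_cast (by omega : ⌈(D+1)/ε⌉₊ < n₀)
      linarith
    rw [div_lt_iff₀ hε] at h1
    rw [div_lt_iff₀ hn₀pos]
    linarith [h1]
  rw [Real.dist_eq, sub_zero]
  have hsup0 : 0 ≤ ⨆ x : C, ‖T^[m+1] (x:E) - T^[m] (x:E)‖ :=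
    Real.iSup_nonneg fun _ => norm_nonneg _
  rw [abs_of_nonneg hsup0]
  rcases isEmpty_or_nonempty (↥C) with h | h
  · rw [Real.iSup_of_isEmpty]
    exact hε
  · refine lt_of_le_of_lt (ciSup_le fun x => ?_) hlt
    rw [norm_sub_rev]
    exact key x.1 x.2
end

section
/- Let C be a bounded subset of a Banach space and T : C → C a firmly nonexpansive mapping. If there exists a nonempty set D ⊆ C with T(D) = D, then D is contained in the fixed point set of T; in particular T has a fixed point. -/
open Function Set Filter Topology

/-- If a firmly nonexpansive `T` on a bounded subset `C` of a Banach space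
satisfies `T(D) = D` for some nonempty `D ⊆ C`, then `D` consists of fixed
points of `T`; in particular `T` has a fixed point. -/
theorem stmt5 {E : Type*} [NormedAddCommGroup E] [NormedSpace ℝ E]
    [CompleteSpace E] (C : Set E) (hC : Bornology.IsBounded C)
    (T : E → E) (hTC : Set.MapsTo T C C)
    (hfne : ∀ x ∈ C, ∀ y ∈ C, ∀ α ∈ Set.Ioo (0 : ℝ) 1,
      ‖T x - T y‖ ≤ ‖α • (x - y) + (1 - α) • (T x - T y)‖)
    (D : Set E) (hDC : D ⊆ C) (hD : D.Nonempty) (hTD : T '' D = D) :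
    (∀ x ∈ D, T x = x) ∧ ∃ x ∈ C, T x = x := by
  obtain ⟨M, hM⟩ := Metric.isBounded_iff.mp hC
  -- the half inequality: 2‖Tp - Tq‖ ≤ ‖p - Tq‖ + ‖Tp - q‖
  have half : ∀ p ∈ C, ∀ q ∈ C, 2 * ‖T p - T q‖ ≤ ‖p - T q‖ + ‖T p - q‖ := by
    intro p hp q hq
    have h := hfne p hp q hq (1/2) ⟨by norm_num, by norm_num⟩
    have e : (1/2 : ℝ) • (p - q) + (1 - 1/2 : ℝ) • (T p - T q)
        = (1/2 : ℝ) • ((p - T q) + (T p - q)) := by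
      have : (1 - 1/2 : ℝ) = 1/2 := by norm_num
      rw [this, ← smul_add]
      congr 1
      abel
    rw [e, norm_smul] at h
    have htri : ‖(p - T q) + (T p - q)‖ ≤ ‖p - T q‖ + ‖T p - q‖ := norm_add_le _ _
    simp only [Real.norm_eq_abs] at h
    rw [abs_of_pos (by norm_num : (0:ℝ) < 1/2)] at h
    linarith
  have key : ∀ x ∈ D, T x = x := by
    intro x0 hx0
    have hpre : ∀ z ∈ D, ∃ w, w ∈ D ∧ T w = z := by
      intro z hz
      rw [← hTD] at hz
      obtain ⟨w, hw, h⟩ := hz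
      exact ⟨w, hw, h⟩
    choose! f hfD hfT using hpre
    set x : ℕ → E := fun n => f^[n] x0 with hxdef
    have hxD : ∀ n, x n ∈ D := by
      intro n
      induction n with
      | zero => simpa [x] using hx0
      | succ n ih =>
        have : x (n+1) = f (x n) := by
          simp [x, Function.iterate_succ_apply']
        rw [this]
        exact hfD _ ih
    have hxT : ∀ n, T (x (n+1)) = x n := by
      intro n
      have : x (n+1) = f (x n) := by
        simp [x, Function.iterate_succ_apply']
      rw [this]
      exact hfT _ (hxD n)
    -- the gap suprema
    set c : ℕ → ℝ := fun m => ⨆ j, ‖x j - x (j+m)‖ with hcdef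
    have bdd : ∀ m, BddAbove (Set.range fun j => ‖x j - x (j+m)‖) := by
      intro m
      refine ⟨M, ?_⟩
      rintro r ⟨j, rfl⟩
      have := hM (hDC (hxD j)) (hDC (hxD (j+m)))
      rwa [dist_eq_norm] at this
    have hle : ∀ m j, ‖x j - x (j+m)‖ ≤ c m := fun m j => le_ciSup (bdd m) j
    have hcM : ∀ m, c m ≤ M := by
      intro m
      apply ciSup_le
      intro j
      have := hM (hDC (hxD j)) (hDC (hxD (j+m)))
      rwa [dist_eq_norm] at this
    have c0 : c 0 = 0 := by
      have : (fun j => ‖x j - x (j+0)‖) = fun _ => (0:ℝ) := by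
        funext j; simp
      simp only [hcdef, this, ciSup_const]
    -- convexity: 2 c (m+1) ≤ c m + c (m+2)
    have hconv : ∀ m, 2 * c (m+1) ≤ c m + c (m+2) := by
      intro m
      have hstep : ∀ j, ‖x j - x (j+(m+1))‖ ≤ (c m + c (m+2)) / 2 := by
        intro j
        have h := half (x (j+1)) (hDC (hxD (j+1))) (x (j+m+2)) (hDC (hxD (j+m+2)))
        have e1 : T (x (j+1)) = x j := hxT j
        have e2 : T (x (j+m+2)) = x (j+m+1) := hxT (j+m+1)
        rw [e1, e2] at h
        have b1 : ‖x (j+1) - x ((j+1)+m)‖ ≤ c m := hle m (j+1)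
        have e3 : (j+1)+m = j+m+1 := by omega
        rw [e3] at b1
        have b2 : ‖x j - x (j+(m+2))‖ ≤ c (m+2) := hle (m+2) j
        have e4 : j+(m+2) = j+m+2 := by omega
        rw [e4] at b2
        have e5 : j+(m+1) = j+m+1 := by omega
        rw [e5]
        linarith
      have := ciSup_le hstep
      have hc1 : c (m+1) ≤ (c m + c (m+2)) / 2 := this
      linarith
    -- increments are nondecreasing, first increment is c 1
    have hδ : ∀ m, c 1 ≤ c (m+1) - c m := by
      intro m
      induction m with
      | zero => rw [c0]; linarith
      | succ n ih =>
        have := hconv n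
        linarith
    have hlin : ∀ m : ℕ, (m:ℝ) * c 1 ≤ c m := by
      intro m
      induction m with
      | zero => simp [c0]
      | succ n ih =>
        have := hδ n
        push_cast
        nlinarith
    have hc1 : c 1 ≤ 0 := by
      by_contra h
      push_neg at h
      obtain ⟨n, hn⟩ := exists_nat_gt (M / c 1)
      have h1 : M < (n:ℝ) * c 1 := by
        rw [div_lt_iff₀ h] at hn
        linarith
      have h2 := hlin n
      have h3 := hcM n
      linarith
    have h01 : ‖x 0 - x 1‖ ≤ c 1 := hle 1 0
    have h01' : x 0 = x 1 := by
      have : ‖x 0 - x 1‖ = 0 := le_antisymm (h01.trans hc1) (norm_nonneg _)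
      rwa [norm_sub_eq_zero_iff] at this
    have hx00 : x 0 = x0 := by simp [x]
    calc T x0 = T (x 1) := by rw [← hx00, h01']
    _ = x 0 := hxT 0
    _ = x0 := hx00
  refine ⟨key, ?_⟩
  obtain ⟨y, hy⟩ := hD
  exact ⟨y, hDC hy, key y hy⟩
end

section
/- Let C be a convex bounded subset of a Banach space, S : C → C nonexpansive, and α ∈ (0,1). Then the averaged mapping T = αI + (1−α)S maps C into C and is uniformly asymptotically regular. -/
open Function Set Filter Topology

namespace IEDaux

variable {E : Type*} [NormedAddCommGroup E] [NormedSpace ℝ E]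

/-- the averaged map -/
def iedT (S : E → E) (α : ℝ) : E → E := fun x => α • x + (1 - α) • S x

/-- residual norms along the iteration -/
noncomputable def iedA (S : E → E) (α : ℝ) (x : E) (n : ℕ) : ℝ :=
  ‖(iedT S α)^[n] x - S ((iedT S α)^[n] x)‖

variable {C : Set E} {S : E → E} {α : ℝ}

lemma iedT_mapsTo (hconv : Convex ℝ C) (hSC : Set.MapsTo S C C)
    (hα : α ∈ Set.Ioo (0:ℝ) 1) : Set.MapsTo (iedT S α) C C := fun x hx =>
  hconv hx (hSC hx) hα.1.le (by linarith [hα.2]) (by ring)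

lemma iedT_sub (S : E → E) (α : ℝ) (x : E) :
    iedT S α x - x = (1 - α) • (S x - x) := by
  simp only [iedT, smul_sub]
  module

lemma iedA_nonneg (S : E → E) (α : ℝ) (x : E) (n : ℕ) : 0 ≤ iedA S α x n :=
  norm_nonneg _

lemma iter_mem (hconv : Convex ℝ C) (hSC : Set.MapsTo S C C)
    (hα : α ∈ Set.Ioo (0:ℝ) 1) {x : E} (hx : x ∈ C) (n : ℕ) :
    (iedT S α)^[n] x ∈ C :=
  (iedT_mapsTo hconv hSC hα).iterate n hx

lemma iedA_succ_le (hconv : Convex ℝ C) (hSC : Set.MapsTo S C C)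
    (hne : ∀ x ∈ C, ∀ y ∈ C, ‖S x - S y‖ ≤ ‖x - y‖)
    (hα : α ∈ Set.Ioo (0:ℝ) 1) {x : E} (hx : x ∈ C) (n : ℕ) :
    iedA S α x (n + 1) ≤ iedA S α x n := by
  set y := (iedT S α)^[n] x with hy
  have hyC : y ∈ C := iter_mem hconv hSC hα hx n
  have hTyC : iedT S α y ∈ C := iedT_mapsTo hconv hSC hα hyC
  have h1 : iedT S α y - S y = α • (y - S y) := by
    simp only [iedT, smul_sub]; module
  have h2 : ‖S y - S (iedT S α y)‖ ≤ ‖y - iedT S α y‖ := hne y hyC _ hTyC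
  have h3 : ‖y - iedT S α y‖ = (1 - α) * ‖y - S y‖ := by
    rw [← norm_neg, neg_sub, iedT_sub, norm_smul, Real.norm_eq_abs,
      abs_of_nonneg (by linarith [hα.2]), ← norm_neg, neg_sub]
  have h4 : iedA S α x (n+1) = ‖iedT S α y - S (iedT S α y)‖ := by
    rw [iedA, Function.iterate_succ_apply', hy]
  have h5 : iedT S α y - S (iedT S α y) = (iedT S α y - S y) + (S y - S (iedT S α y)) := by
    abel
  have h6 : ‖iedT S α y - S (iedT S α y)‖ ≤ α * ‖y - S y‖ + (1 - α) * ‖y - S y‖ := by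
    rw [h5]
    refine (norm_add_le _ _).trans ?_
    gcongr
    · rw [h1, norm_smul, Real.norm_eq_abs, abs_of_nonneg hα.1.le]
    · rw [← h3]; exact h2
  have : iedA S α x n = ‖y - S y‖ := rfl
  rw [h4, this] at *
  nlinarith [h6]

lemma iedA_antitone (hconv : Convex ℝ C) (hSC : Set.MapsTo S C C)
    (hne : ∀ x ∈ C, ∀ y ∈ C, ‖S x - S y‖ ≤ ‖x - y‖)
    (hα : α ∈ Set.Ioo (0:ℝ) 1) {x : E} (hx : x ∈ C) {i j : ℕ} (hij : i ≤ j) :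
    iedA S α x j ≤ iedA S α x i := by
  induction j with
  | zero => simp_all
  | succ n ih =>
    rcases Nat.lt_or_ge i (n+1) with h | h
    · exact (iedA_succ_le hconv hSC hne hα hx n).trans (ih (by omega))
    · have : i = n + 1 := by omega
      simp [this]

lemma ied_step_norm (S : E → E) {α : ℝ} (hα : α ∈ Set.Ioo (0:ℝ) 1) (x : E) (n : ℕ) :
    ‖(iedT S α)^[n+1] x - (iedT S α)^[n] x‖ = (1 - α) * iedA S α x n := by
  rw [Function.iterate_succ_apply', iedT_sub, norm_smul, Real.norm_eq_abs,
    abs_of_nonneg (by linarith [hα.2]), iedA, ← norm_neg, neg_sub]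

lemma ied_iter_dist (hconv : Convex ℝ C) (hSC : Set.MapsTo S C C)
    (hne : ∀ x ∈ C, ∀ y ∈ C, ‖S x - S y‖ ≤ ‖x - y‖)
    (hα : α ∈ Set.Ioo (0:ℝ) 1) {x : E} (hx : x ∈ C) (k j : ℕ) :
    ‖(iedT S α)^[k + j] x - (iedT S α)^[k] x‖ ≤ (1 - α) * j * iedA S α x k := by
  induction j with
  | zero => simp
  | succ m ih =>
    have h1 : ‖(iedT S α)^[k + (m+1)] x - (iedT S α)^[k + m] x‖
        = (1 - α) * iedA S α x (k + m) := by
      have : k + (m + 1) = (k + m) + 1 := by omega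
      rw [this]; exact ied_step_norm S hα x (k + m)
    have h2 : iedA S α x (k + m) ≤ iedA S α x k :=
      iedA_antitone hconv hSC hne hα hx (by omega)
    have h3 : ‖(iedT S α)^[k + (m+1)] x - (iedT S α)^[k] x‖ ≤
        ‖(iedT S α)^[k + (m+1)] x - (iedT S α)^[k+m] x‖ +
        ‖(iedT S α)^[k + m] x - (iedT S α)^[k] x‖ := norm_sub_le_norm_sub_add_norm_sub _ _ _
    have hα1 : (0:ℝ) ≤ 1 - α := by linarith [hα.2]
    have := iedA_nonneg S α x k
    push_cast
    nlinarith [h3, h1, ih]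



lemma ied_closed (S : E → E) {α : ℝ} (hα0 : α ≠ 0) (x : E) (n : ℕ) :
    (α⁻¹)^(n+1) • (iedT S α)^[n+1] x
      = x + ∑ k ∈ Finset.range (n+1), ((1-α) * (α⁻¹)^(k+1)) • S ((iedT S α)^[k] x) := by
  induction n with
  | zero =>
    simp only [zero_add, pow_one, Function.iterate_one, Finset.range_one,
      Finset.sum_singleton, Function.iterate_zero, id_eq]
    show α⁻¹ • (α • x + (1 - α) • S x) = x + ((1 - α) * α⁻¹) • S x
    rw [smul_add, smul_smul, smul_smul, inv_mul_cancel₀ hα0, one_smul, mul_comm]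
  | succ m ih =>
    rw [Function.iterate_succ_apply']
    have hT : iedT S α ((iedT S α)^[m+1] x)
        = α • (iedT S α)^[m+1] x + (1 - α) • S ((iedT S α)^[m+1] x) := rfl
    have h1 : (α⁻¹)^(m+1+1) * α = (α⁻¹)^(m+1) := by
      rw [pow_succ, mul_assoc, inv_mul_cancel₀ hα0, mul_one]
    have h2 : (α⁻¹)^(m+1+1) * (1-α) = (1-α) * (α⁻¹)^(m+1+1) := mul_comm _ _
    rw [hT, smul_add, smul_smul, h1, ih, smul_smul, h2,
      Finset.sum_range_succ (fun k => ((1-α) * (α⁻¹)^(k+1)) • S ((iedT S α)^[k] x)) (m+1)]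
    abel

lemma scalarA {α : ℝ} (m : ℕ) :
    (1-α) * ∑ j ∈ Finset.range m, α^j = 1 - α^m := by
  induction m with
  | zero => simp
  | succ k ih => rw [Finset.sum_range_succ, mul_add, ih, pow_succ]; ring

lemma scalarB {α : ℝ} (m : ℕ) :
    (1-α)^2 * ∑ j ∈ Finset.range m, ((j:ℝ)+1) * α^j = 1 - α^m * (1 + m*(1-α)) := by
  induction m with
  | zero => simp
  | succ k ih =>
    rw [Finset.sum_range_succ, mul_add, ih]
    push_cast
    ring

lemma coef_eq {α : ℝ} (hα0 : α ≠ 0) {k n : ℕ} (hk : k ≤ n) :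
    α^(n+1) * (α⁻¹)^(k+1) = α^(n-k) := by
  have h : α^(n+1) = α^(n-k) * α^(k+1) := by rw [← pow_add]; congr 1; omega
  rw [h, mul_assoc, ← mul_pow, mul_inv_cancel₀ hα0, one_pow, mul_one]

lemma coef_sum {α : ℝ} (hα0 : α ≠ 0) (n : ℕ) :
    α^(n+1) + ∑ k ∈ Finset.range (n+1), (1-α) * (α^(n+1) * (α⁻¹)^(k+1)) = 1 := by
  have h1 : ∀ k ∈ Finset.range (n+1), (1-α) * (α^(n+1) * (α⁻¹)^(k+1))
      = (1-α) * α^(n-k) := fun k hk => by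
    rw [coef_eq hα0 (Nat.lt_succ_iff.mp (Finset.mem_range.mp hk))]
  rw [Finset.sum_congr rfl h1]
  have hr := Finset.sum_range_reflect (fun j => α^j) (n+1)
  simp only [Nat.add_sub_cancel] at hr
  rw [← Finset.mul_sum, hr, scalarA]
  ring

lemma coef_sum_weighted {α : ℝ} (hα0 : α ≠ 0) (n : ℕ) :
    ∑ k ∈ Finset.range (n+1), ((1-α) * (α^(n+1) * (α⁻¹)^(k+1))) * ((1-α) * ((n+1-k : ℕ) : ℝ))
      = 1 - α^(n+1) * (1 + (n+1)*(1-α)) := by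
  have h1 : ∀ k ∈ Finset.range (n+1), ((1-α) * (α^(n+1) * (α⁻¹)^(k+1))) * ((1-α) * ((n+1-k : ℕ) : ℝ))
      = (1-α)^2 * (((n-k : ℕ):ℝ)+1) * α^(n-k) := by
    intro k hk
    have hk' : k ≤ n := Nat.lt_succ_iff.mp (Finset.mem_range.mp hk)
    rw [coef_eq hα0 hk']
    have hc : ((n+1-k : ℕ) : ℝ) = ((n-k : ℕ):ℝ) + 1 := by
      have h : n+1-k = (n-k)+1 := by omega
      rw [h]; push_cast; ring
    rw [hc]; ring
  rw [Finset.sum_congr rfl h1]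
  have hr := Finset.sum_range_reflect (fun j => (1-α)^2 * ((j:ℝ)+1) * α^j) (n+1)
  simp only [Nat.add_sub_cancel] at hr
  rw [hr]
  have h3 : ∑ j ∈ Finset.range (n+1), (1-α)^2 * ((j:ℝ)+1) * α^j
      = (1-α)^2 * ∑ j ∈ Finset.range (n+1), ((j:ℝ)+1) * α^j := by
    rw [Finset.mul_sum]; exact Finset.sum_congr rfl fun j _ => by ring
  rw [h3, scalarB]
  push_cast; ring


lemma ied_key (hconv : Convex ℝ C) (hSC : Set.MapsTo S C C)
    (hne : ∀ x ∈ C, ∀ y ∈ C, ‖S x - S y‖ ≤ ‖x - y‖)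
    (hα : α ∈ Set.Ioo (0:ℝ) 1) {x : E} (hx : x ∈ C) (n : ℕ) :
    iedA S α x (n+1) ≤ α^(n+1) * ‖x - S ((iedT S α)^[n+1] x)‖
      + (1 - α^(n+1) * (1 + (n+1)*(1-α))) * iedA S α x 0 := by
  have hαpos : (0:ℝ) < α := hα.1
  have hα0 : α ≠ 0 := ne_of_gt hα.1
  have hα1 : (0:ℝ) < 1 - α := by linarith [hα.2]
  set s : E := S ((iedT S α)^[n+1] x) with hs
  set c : ℕ → ℝ := fun k => α^(n+1) * ((1-α) * (α⁻¹)^(k+1)) with hcdef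
  -- closed form
  have h1 : (iedT S α)^[n+1] x
      = α^(n+1) • x + ∑ k ∈ Finset.range (n+1), c k • S ((iedT S α)^[k] x) := by
    have hc := congrArg (fun v : E => (α^(n+1) : ℝ) • v) (ied_closed S hα0 x n)
    simp only [smul_add, smul_smul, Finset.smul_sum] at hc
    rwa [← mul_pow, mul_inv_cancel₀ hα0, one_pow, one_smul] at hc
  set γ : ℝ := ∑ k ∈ Finset.range (n+1), c k with hγdef
  have hγ : α^(n+1) + γ = 1 := by
    rw [hγdef]
    have := coef_sum hα0 n
    rw [← this]
    congr 1
    exact Finset.sum_congr rfl fun k _ => by rw [hcdef]; ring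
  have hcpos : ∀ k, 0 ≤ c k := fun k => by
    rw [hcdef]
    have : (0:ℝ) < α⁻¹ := inv_pos.mpr hα.1
    positivity
  have e2 : s = α^(n+1) • s + γ • s := by rw [← add_smul, hγ, one_smul]
  have e1 : ∑ k ∈ Finset.range (n+1), c k • (S ((iedT S α)^[k] x) - s)
      = ∑ k ∈ Finset.range (n+1), c k • S ((iedT S α)^[k] x) - γ • s := by
    rw [hγdef, Finset.sum_smul, ← Finset.sum_sub_distrib]
    exact Finset.sum_congr rfl fun k _ => smul_sub _ _ _
  have hsplit : (iedT S α)^[n+1] x - s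
      = α^(n+1) • (x - s) + ∑ k ∈ Finset.range (n+1), c k • (S ((iedT S α)^[k] x) - s) := by
    calc (iedT S α)^[n+1] x - s
        = (α^(n+1) • x + ∑ k ∈ Finset.range (n+1), c k • S ((iedT S α)^[k] x))
            - (α^(n+1) • s + γ • s) := by rw [← h1, ← e2]
      _ = α^(n+1) • (x - s)
            + (∑ k ∈ Finset.range (n+1), c k • S ((iedT S α)^[k] x) - γ • s) := by
          rw [smul_sub]; abel
      _ = _ := by rw [e1]
  -- norm estimate
  have hA : iedA S α x (n+1) = ‖(iedT S α)^[n+1] x - s‖ := rfl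
  have hnorm : iedA S α x (n+1) ≤ α^(n+1) * ‖x - s‖
      + ∑ k ∈ Finset.range (n+1), c k * ‖S ((iedT S α)^[k] x) - s‖ := by
    rw [hA, hsplit]
    refine (norm_add_le _ _).trans ?_
    gcongr
    · rw [norm_smul, Real.norm_eq_abs, abs_of_nonneg (by positivity)]
    · refine (norm_sum_le _ _).trans ?_
      refine Finset.sum_le_sum fun k _ => ?_
      rw [norm_smul, Real.norm_eq_abs, abs_of_nonneg (hcpos k)]
  -- bound each difference of S-values
  have hterm : ∀ k ∈ Finset.range (n+1),
      c k * ‖S ((iedT S α)^[k] x) - s‖ ≤ c k * ((1-α) * ((n+1-k : ℕ):ℝ) * iedA S α x 0) := by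
    intro k hk
    have hkn : k ≤ n := Nat.lt_succ_iff.mp (Finset.mem_range.mp hk)
    refine mul_le_mul_of_nonneg_left ?_ (hcpos k)
    have hmem1 : (iedT S α)^[k] x ∈ C := iter_mem hconv hSC hα hx k
    have hmem2 : (iedT S α)^[n+1] x ∈ C := iter_mem hconv hSC hα hx (n+1)
    have hne' : ‖S ((iedT S α)^[k] x) - s‖ ≤ ‖(iedT S α)^[k] x - (iedT S α)^[n+1] x‖ :=
      hne _ hmem1 _ hmem2
    have hdist : ‖(iedT S α)^[k] x - (iedT S α)^[n+1] x‖
        ≤ (1-α) * ((n+1-k : ℕ):ℝ) * iedA S α x k := by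
      rw [← norm_neg, neg_sub]
      have h := ied_iter_dist hconv hSC hne hα hx k (n+1-k)
      have hkk : k + (n+1-k) = n+1 := by omega
      rwa [hkk] at h
    have hmono : iedA S α x k ≤ iedA S α x 0 :=
      iedA_antitone hconv hSC hne hα hx (Nat.zero_le k)
    have hnn : (0:ℝ) ≤ (1-α) * ((n+1-k : ℕ):ℝ) := by positivity
    calc ‖S ((iedT S α)^[k] x) - s‖ ≤ (1-α) * ((n+1-k : ℕ):ℝ) * iedA S α x k :=
          hne'.trans hdist
      _ ≤ (1-α) * ((n+1-k : ℕ):ℝ) * iedA S α x 0 := by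
          exact mul_le_mul_of_nonneg_left hmono hnn
  have hsum : ∑ k ∈ Finset.range (n+1), c k * ((1-α) * ((n+1-k : ℕ):ℝ) * iedA S α x 0)
      = (1 - α^(n+1) * (1 + (n+1)*(1-α))) * iedA S α x 0 := by
    rw [← coef_sum_weighted hα0 n, Finset.sum_mul]
    exact Finset.sum_congr rfl fun k _ => by rw [hcdef]; ring
  calc iedA S α x (n+1)
      ≤ α^(n+1) * ‖x - s‖ + ∑ k ∈ Finset.range (n+1), c k * ‖S ((iedT S α)^[k] x) - s‖ :=
        hnorm
    _ ≤ α^(n+1) * ‖x - s‖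
        + ∑ k ∈ Finset.range (n+1), c k * ((1-α) * ((n+1-k : ℕ):ℝ) * iedA S α x 0) := by
        exact add_le_add (le_refl _) (Finset.sum_le_sum hterm)
    _ = _ := by rw [hsum]

lemma iedA_shift (S : E → E) (α : ℝ) (x : E) (i k : ℕ) :
    iedA S α ((iedT S α)^[i] x) k = iedA S α x (i + k) := by
  simp only [iedA, ← Function.iterate_add_apply, Nat.add_comm k i]

lemma ied_bound (hconv : Convex ℝ C) (hSC : Set.MapsTo S C C)
    (hne : ∀ x ∈ C, ∀ y ∈ C, ‖S x - S y‖ ≤ ‖x - y‖)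
    (hα : α ∈ Set.Ioo (0:ℝ) 1) {d : ℝ} (hd : ∀ p ∈ C, ∀ q ∈ C, ‖p - q‖ ≤ d)
    {x : E} (hx : x ∈ C) (i n : ℕ) :
    α^(n+1) * ((1 + ((n:ℝ)+1)*(1-α)) * iedA S α x (i + (n+1)))
      ≤ α^(n+1) * d + (iedA S α x i - iedA S α x (i + (n+1))) := by
  have hαpos : (0:ℝ) < α := hα.1
  have hα1 : (0:ℝ) < 1 - α := by linarith [hα.2]
  have hiC : (iedT S α)^[i] x ∈ C := iter_mem hconv hSC hα hx i
  have key := ied_key hconv hSC hne hα hiC n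
  rw [iedA_shift, iedA_shift] at key
  simp only [Nat.add_zero] at key
  have hb : ‖(iedT S α)^[i] x - S ((iedT S α)^[n+1] ((iedT S α)^[i] x))‖ ≤ d :=
    hd _ hiC _ (hSC (iter_mem hconv hSC hα hiC (n+1)))
  have hmono : iedA S α x (i + (n+1)) ≤ iedA S α x i :=
    iedA_antitone hconv hSC hne hα hx (by omega)
  have hP : (0:ℝ) ≤ α^(n+1) * (1 + ((n:ℝ)+1)*(1-α)) := by positivity
  have h1 : α^(n+1) * (1 + ((n:ℝ)+1)*(1-α)) * iedA S α x (i + (n+1))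
      ≤ α^(n+1) * (1 + ((n:ℝ)+1)*(1-α)) * iedA S α x i :=
    mul_le_mul_of_nonneg_left hmono hP
  have h2 : α^(n+1) * ‖(iedT S α)^[i] x - S ((iedT S α)^[n+1] ((iedT S α)^[i] x))‖
      ≤ α^(n+1) * d := mul_le_mul_of_nonneg_left hb (by positivity)
  nlinarith [key, h1, h2, iedA_nonneg S α x (i + (n+1))]

lemma ied_unif (hconv : Convex ℝ C) (hSC : Set.MapsTo S C C)
    (hne : ∀ x ∈ C, ∀ y ∈ C, ‖S x - S y‖ ≤ ‖x - y‖)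
    (hα : α ∈ Set.Ioo (0:ℝ) 1) {d : ℝ} (hd : ∀ p ∈ C, ∀ q ∈ C, ‖p - q‖ ≤ d) :
    ∀ ε > 0, ∃ N : ℕ, ∀ x ∈ C, ∀ n ≥ N, iedA S α x n ≤ ε := by
  intro ε hε
  have hαpos : (0:ℝ) < α := hα.1
  have hα1 : (0:ℝ) < 1 - α := by linarith [hα.2]
  obtain ⟨m, hm⟩ := exists_nat_ge ((d+1)/((1-α)*ε))
  obtain ⟨K, hK⟩ := exists_nat_ge (d * (α⁻¹)^(m+1))
  refine ⟨(K+1)*(m+1), fun x hx n hn => ?_⟩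
  have hαm : (0:ℝ) < α^(m+1) := by positivity
  have hd0 : iedA S α x 0 ≤ d := hd _ hx _ (hSC hx)
  have hpig : ∃ j ∈ Finset.range (K+1),
      iedA S α x (j*(m+1)) - iedA S α x (j*(m+1)+(m+1)) ≤ α^(m+1) := by
    by_contra hcon
    push_neg at hcon
    have hsum : ∑ _j ∈ Finset.range (K+1), α^(m+1)
        < ∑ j ∈ Finset.range (K+1),
            (iedA S α x (j*(m+1)) - iedA S α x (j*(m+1)+(m+1))) :=
      Finset.sum_lt_sum_of_nonempty Finset.nonempty_range_add_one fun j hj => hcon j hj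
    have htel : ∑ j ∈ Finset.range (K+1),
        (iedA S α x (j*(m+1)) - iedA S α x (j*(m+1)+(m+1)))
        = iedA S α x 0 - iedA S α x ((K+1)*(m+1)) := by
      have := Finset.sum_range_sub' (fun j => iedA S α x (j*(m+1))) (K+1)
      simp only [Nat.zero_mul] at this
      rw [← this]
      refine Finset.sum_congr rfl fun j _ => ?_
      have : (j+1)*(m+1) = j*(m+1)+(m+1) := by ring
      rw [this]
    rw [htel, Finset.sum_const, Finset.card_range, nsmul_eq_mul] at hsum
    have hKb : d + α^(m+1) ≤ ((K:ℝ)+1) * α^(m+1) := by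
      have h1 : d ≤ (K:ℝ) * α^(m+1) := by
        have h2 : d * (α⁻¹)^(m+1) * α^(m+1) ≤ (K:ℝ) * α^(m+1) :=
          mul_le_mul_of_nonneg_right hK hαm.le
        have h3 : d * (α⁻¹)^(m+1) * α^(m+1) = d := by
          rw [mul_assoc, ← mul_pow, inv_mul_cancel₀ (ne_of_gt hαpos), one_pow, mul_one]
        linarith [h2, h3.symm.le]
      nlinarith
    have := iedA_nonneg S α x ((K+1)*(m+1))
    push_cast at hsum
    linarith
  obtain ⟨j, hj, hjle⟩ := hpig
  have hb := ied_bound hconv hSC hne hα hd hx (j*(m+1)) m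
  have h2 : (1 + ((m:ℝ)+1)*(1-α)) * iedA S α x (j*(m+1)+(m+1)) ≤ d + 1 := by
    have hgoal : α^(m+1) * ((1 + ((m:ℝ)+1)*(1-α)) * iedA S α x (j*(m+1)+(m+1)))
        ≤ α^(m+1) * (d + 1) := by
      calc α^(m+1) * ((1 + ((m:ℝ)+1)*(1-α)) * iedA S α x (j*(m+1)+(m+1)))
          ≤ α^(m+1) * d + (iedA S α x (j*(m+1)) - iedA S α x (j*(m+1)+(m+1))) := hb
        _ ≤ α^(m+1) * d + α^(m+1) := by linarith
        _ = α^(m+1) * (d + 1) := by ring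
    exact (mul_le_mul_iff_right₀ hαm).mp hgoal
  have hMbig : d + 1 ≤ ((m:ℝ)+1)*(1-α)*ε := by
    have h3 : d + 1 ≤ (m:ℝ) * ((1-α)*ε) := by
      rw [← div_le_iff₀ (by positivity)] at *
      linarith [hm]
    nlinarith [mul_pos hα1 hε]
  have h3 : iedA S α x (j*(m+1)+(m+1)) ≤ ε := by
    by_contra hcon
    push_neg at hcon
    have hpos : (0:ℝ) < 1 + ((m:ℝ)+1)*(1-α) := by positivity
    have h4 : (1 + ((m:ℝ)+1)*(1-α)) * ε < (1 + ((m:ℝ)+1)*(1-α)) * iedA S α x (j*(m+1)+(m+1)) :=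
      mul_lt_mul_of_pos_left hcon hpos
    nlinarith
  have hle : j*(m+1)+(m+1) ≤ n := by
    have hj' : j + 1 ≤ K + 1 := Finset.mem_range.mp hj
    calc j*(m+1)+(m+1) = (j+1)*(m+1) := by ring
      _ ≤ (K+1)*(m+1) := Nat.mul_le_mul_right (m+1) hj'
      _ ≤ n := hn
  exact (iedA_antitone hconv hSC hne hα hx hle).trans h3

end IEDaux


open IEDaux in
/-- Ishikawa–Edelstein–O'Brien: the averaged map `T = αI + (1-α)S` of a
nonexpansive mapping on a convex bounded subset of a Banach space maps `C`
into `C` and is uniformly asymptotically regular. -/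
theorem stmt6 {E : Type*} [NormedAddCommGroup E] [NormedSpace ℝ E]
    [CompleteSpace E] (C : Set E) (hconv : Convex ℝ C)
    (hbd : Bornology.IsBounded C)
    (S : E → E) (hSC : Set.MapsTo S C C)
    (hne : ∀ x ∈ C, ∀ y ∈ C, ‖S x - S y‖ ≤ ‖x - y‖)
    (α : ℝ) (hα : α ∈ Set.Ioo (0 : ℝ) 1) :
    Set.MapsTo (fun x => α • x + (1 - α) • S x) C C ∧
    Tendsto (fun n : ℕ => ⨆ x : C,
      ‖(fun x => α • x + (1 - α) • S x)^[n + 1] (x : E) -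
        (fun x => α • x + (1 - α) • S x)^[n] (x : E)‖)
      atTop (𝓝 0) := by
  have hEq : (fun x : E => α • x + (1 - α) • S x) = iedT S α := rfl
  rw [hEq]
  refine ⟨iedT_mapsTo hconv hSC hα, ?_⟩
  obtain ⟨d, hd⟩ := Metric.isBounded_iff.mp hbd
  have hd' : ∀ p ∈ C, ∀ q ∈ C, ‖p - q‖ ≤ d := fun p hp q hq => by
    rw [← dist_eq_norm]; exact hd hp hq
  rw [Metric.tendsto_atTop]
  intro ε hε
  obtain ⟨N, hN⟩ := ied_unif hconv hSC hne hα hd' (ε/2) (by positivity)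
  refine ⟨N, fun n hn => ?_⟩
  have hkey : ∀ x : C, ‖(iedT S α)^[n+1] (x:E) - (iedT S α)^[n] (x:E)‖ ≤ ε/2 := by
    intro x
    rw [ied_step_norm S hα (x:E) n]
    have h2 : iedA S α (x:E) n ≤ ε/2 := hN (x:E) x.2 n hn
    have h0 : 0 ≤ iedA S α (x:E) n := iedA_nonneg _ _ _ _
    nlinarith [hα.1, hα.2, mul_nonneg hα.1.le h0]
  have hsup_le : (⨆ x : C, ‖(iedT S α)^[n+1] (x:E) - (iedT S α)^[n] (x:E)‖) ≤ ε/2 :=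
    Real.iSup_le hkey (by positivity)
  have hsup_nonneg : (0:ℝ) ≤ ⨆ x : C, ‖(iedT S α)^[n+1] (x:E) - (iedT S α)^[n] (x:E)‖ :=
    Real.iSup_nonneg fun x => norm_nonneg _
  rw [Real.dist_eq, sub_zero, abs_of_nonneg hsup_nonneg]
  linarith
end

section
/- Let C be a convex subset of a Banach space, α ∈ (0,1), S : C → C nonexpansive, and T = αI + (1−α)S the averaged mapping. If there exists a nonempty bounded set D ⊆ C with T(D) = D, then D ⊆ Fix T = Fix S; in particular S has a fixed point. -/
open Function Set Filter Topology



lemma aux_mono1 {E : Type*} [NormedAddCommGroup E] [NormedSpace ℝ E]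
    (C : Set E) (S : E → E)
    (hne : ∀ x ∈ C, ∀ y ∈ C, ‖S x - S y‖ ≤ ‖x - y‖)
    (α : ℝ) (hα0 : 0 < α) (hα1 : α < 1)
    (T : E → E) (hT : ∀ x, T x = α • x + (1 - α) • S x)
    (x : ℕ → E) (hxC : ∀ k, x k ∈ C)
    (hstep : ∀ k, x (k+1) = T (x k)) (n : ℕ) :
    ‖S (x (n+1)) - x (n+1)‖ ≤ ‖S (x n) - x n‖ := by
  have hx1 : x (n+1) = α • x n + (1 - α) • S (x n) := by rw [hstep, hT]
  have e1 : S (x (n+1)) - x (n+1) = (S (x (n+1)) - S (x n)) + α • (S (x n) - x n) := by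
    rw [hx1]; module
  have e2 : x (n+1) - x n = (1 - α) • (S (x n) - x n) := by rw [hx1]; module
  calc ‖S (x (n+1)) - x (n+1)‖ ≤ ‖S (x (n+1)) - S (x n)‖ + ‖α • (S (x n) - x n)‖ := by
        rw [e1]; exact norm_add_le _ _
    _ ≤ ‖x (n+1) - x n‖ + α * ‖S (x n) - x n‖ := by
        have := hne (x (n+1)) (hxC _) (x n) (hxC _)
        rw [norm_smul, Real.norm_eq_abs, abs_of_pos hα0]; linarith
    _ = (1-α) * ‖S (x n) - x n‖ + α * ‖S (x n) - x n‖ := by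
        rw [e2, norm_smul, Real.norm_eq_abs, abs_of_pos (by linarith)]
    _ = ‖S (x n) - x n‖ := by ring

lemma aux_mono {E : Type*} [NormedAddCommGroup E] [NormedSpace ℝ E]
    (C : Set E) (S : E → E)
    (hne : ∀ x ∈ C, ∀ y ∈ C, ‖S x - S y‖ ≤ ‖x - y‖)
    (α : ℝ) (hα0 : 0 < α) (hα1 : α < 1)
    (T : E → E) (hT : ∀ x, T x = α • x + (1 - α) • S x)
    (x : ℕ → E) (hxC : ∀ k, x k ∈ C)
    (hstep : ∀ k, x (k+1) = T (x k)) (m n : ℕ) :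
    ‖S (x (n+m)) - x (n+m)‖ ≤ ‖S (x n) - x n‖ := by
  induction m with
  | zero => simp
  | succ m ih =>
      have := aux_mono1 C S hne α hα0 hα1 T hT x hxC hstep (n+m)
      calc ‖S (x (n+(m+1))) - x (n+(m+1))‖ = ‖S (x ((n+m)+1)) - x ((n+m)+1)‖ := by ring_nf
        _ ≤ ‖S (x (n+m)) - x (n+m)‖ := this
        _ ≤ ‖S (x n) - x n‖ := ih

lemma aux_dist {E : Type*} [NormedAddCommGroup E] [NormedSpace ℝ E]
    (C : Set E) (S : E → E)
    (hne : ∀ x ∈ C, ∀ y ∈ C, ‖S x - S y‖ ≤ ‖x - y‖)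
    (α : ℝ) (hα0 : 0 < α) (hα1 : α < 1)
    (T : E → E) (hT : ∀ x, T x = α • x + (1 - α) • S x)
    (x : ℕ → E) (hxC : ∀ k, x k ∈ C)
    (hstep : ∀ k, x (k+1) = T (x k)) (m n : ℕ) :
    ‖x (n+m) - x n‖ ≤ (1-α) * m * ‖S (x n) - x n‖ := by
  induction m with
  | zero => simp
  | succ m ih =>
      have hx1 : x ((n+m)+1) = α • x (n+m) + (1 - α) • S (x (n+m)) := by rw [hstep, hT]
      have e2 : x ((n+m)+1) - x (n+m) = (1 - α) • (S (x (n+m)) - x (n+m)) := by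
        rw [hx1]; module
      have h1 : ‖x ((n+m)+1) - x (n+m)‖ ≤ (1-α) * ‖S (x n) - x n‖ := by
        rw [e2, norm_smul, Real.norm_eq_abs, abs_of_pos (by linarith : (0:ℝ) < 1 - α)]
        have := aux_mono C S hne α hα0 hα1 T hT x hxC hstep m n
        nlinarith
      have heq : n + (m+1) = (n+m)+1 := by omega
      rw [heq]
      push_cast
      calc ‖x ((n+m)+1) - x n‖ ≤ ‖x ((n+m)+1) - x (n+m)‖ + ‖x (n+m) - x n‖ :=
            norm_sub_le_norm_sub_add_norm_sub _ _ _
        _ ≤ (1-α) * ‖S (x n) - x n‖ + (1-α) * m * ‖S (x n) - x n‖ := by linarith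
        _ = (1-α) * ((m:ℝ)+1) * ‖S (x n) - x n‖ := by ring

lemma aux_coef (α : ℝ) (hα0 : 0 < α) (hα1 : α < 1) (m : ℕ) :
    α^m * (1 + (1-α)*m) ≤ 1 := by
  induction m with
  | zero => simp
  | succ m ih =>
      have hid : α^(m+1) * (1 + (1-α)*(m+1)) =
          α^m * (1 + (1-α)*m) - α^m * (1-α)^2 * (m+1) := by
        push_cast; ring
      have h1 : 0 ≤ α^m * (1-α)^2 * ((m:ℝ)+1) := by positivity
      push_cast
      linarith


lemma aux_key {E : Type*} [NormedAddCommGroup E] [NormedSpace ℝ E]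
    (C : Set E) (S : E → E)
    (hne : ∀ x ∈ C, ∀ y ∈ C, ‖S x - S y‖ ≤ ‖x - y‖)
    (α : ℝ) (hα0 : 0 < α) (hα1 : α < 1)
    (T : E → E) (hT : ∀ x, T x = α • x + (1 - α) • S x)
    (x : ℕ → E) (hxC : ∀ k, x k ∈ C)
    (hstep : ∀ k, x (k+1) = T (x k)) (m : ℕ) : ∀ n : ℕ,
    ‖S (x (n+m)) - x (n+m)‖ + (α^m * (1 + (1-α)*m) - 1) * ‖S (x n) - x n‖
      ≤ α^m * ‖S (x (n+m)) - x n‖ := by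
  induction m with
  | zero => intro n; simp
  | succ m ih =>
      intro n
      set d : ℕ → ℝ := fun k => ‖S (x k) - x k‖ with hd
      have hx1 : x (n+1) = α • x n + (1 - α) • S (x n) := by rw [hstep, hT]
      -- identity
      have e1 : S (x (n+(m+1))) - x (n+1)
          = α • (S (x (n+(m+1))) - x n) + (1-α) • (S (x (n+(m+1))) - S (x n)) := by
        rw [hx1]; module
      have h2 : ‖S (x (n+(m+1))) - x (n+1)‖
          ≤ α * ‖S (x (n+(m+1))) - x n‖ + (1-α) * ‖x (n+(m+1)) - x n‖ := by
        have hnexp : ‖S (x (n+(m+1))) - S (x n)‖ ≤ ‖x (n+(m+1)) - x n‖ :=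
          hne _ (hxC _) _ (hxC _)
        calc ‖S (x (n+(m+1))) - x (n+1)‖
            ≤ ‖α • (S (x (n+(m+1))) - x n)‖ + ‖(1-α) • (S (x (n+(m+1))) - S (x n))‖ := by
              rw [e1]; exact norm_add_le _ _
          _ = α * ‖S (x (n+(m+1))) - x n‖ + (1-α) * ‖S (x (n+(m+1))) - S (x n)‖ := by
              rw [norm_smul, norm_smul, Real.norm_eq_abs, Real.norm_eq_abs,
                abs_of_pos hα0, abs_of_pos (by linarith : (0:ℝ) < 1 - α)]
          _ ≤ _ := by nlinarith
      have hdist : ‖x (n+(m+1)) - x n‖ ≤ (1-α) * ((m:ℝ)+1) * d n := by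
        have := aux_dist C S hne α hα0 hα1 T hT x hxC hstep (m+1) n
        push_cast at this ⊢
        exact this
      have hmono : d (n+1) ≤ d n := aux_mono1 C S hne α hα0 hα1 T hT x hxC hstep n
      have hcoef : α^m * (1 + (1-α)*m) ≤ 1 := aux_coef α hα0 hα1 m
      have hidx : n + (m+1) = (n+1) + m := by omega
      have hih := ih (n+1)
      rw [← hidx] at hih
      -- hih : d (n+(m+1)) + (α^m * (1+(1-α)*m) - 1) * d (n+1) ≤ α^m * ‖S (x (n+(m+1))) - x (n+1)‖
      have h3 : α^m * ‖S (x (n+(m+1))) - x (n+1)‖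
          ≤ α^(m+1) * ‖S (x (n+(m+1))) - x n‖ + α^m * (1-α)^2 * ((m:ℝ)+1) * d n := by
        have hpow : (0:ℝ) ≤ α^m := by positivity
        have h5 := mul_le_mul_of_nonneg_left h2 hpow
        have h4 : (1-α) * ‖x (n+(m+1)) - x n‖ ≤ (1-α)^2 * ((m:ℝ)+1) * d n := by
          nlinarith
        have h6 := mul_le_mul_of_nonneg_left h4 hpow
        calc α^m * ‖S (x (n+(m+1))) - x (n+1)‖
            ≤ α^m * (α * ‖S (x (n+(m+1))) - x n‖ + (1-α) * ‖x (n+(m+1)) - x n‖) := h5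
          _ = α^(m+1) * ‖S (x (n+(m+1))) - x n‖ + α^m * ((1-α) * ‖x (n+(m+1)) - x n‖) := by
              ring
          _ ≤ α^(m+1) * ‖S (x (n+(m+1))) - x n‖ + α^m * ((1-α)^2 * ((m:ℝ)+1) * d n) := by
              linarith
          _ = α^(m+1) * ‖S (x (n+(m+1))) - x n‖ + α^m * (1-α)^2 * ((m:ℝ)+1) * d n := by
              ring
      have hK : (α^m * (1 + (1-α)*m) - 1) * d n ≤ (α^m * (1 + (1-α)*m) - 1) * d (n+1) := by
        apply mul_le_mul_of_nonpos_left hmono (by linarith)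
      have hid3 : (α^(m+1) * (1 + (1-α)*((m:ℝ)+1)) - 1) * d n
          = (α^m * (1 + (1-α)*(m:ℝ)) - 1) * d n - α^m * (1-α)^2 * ((m:ℝ)+1) * d n := by
        ring
      push_cast
      linarith


/-- For the averaged map `T = αI + (1-α)S` of a nonexpansive `S` on a convex
subset of a Banach space: if `T(D) = D` for a nonempty bounded `D ⊆ C`, then
`D ⊆ Fix T = Fix S`, and `S` has a fixed point. -/
theorem stmt7 {E : Type*} [NormedAddCommGroup E] [NormedSpace ℝ E]
    [CompleteSpace E] (C : Set E) (hconv : Convex ℝ C)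
    (S : E → E) (hSC : Set.MapsTo S C C)
    (hne : ∀ x ∈ C, ∀ y ∈ C, ‖S x - S y‖ ≤ ‖x - y‖)
    (α : ℝ) (hα : α ∈ Set.Ioo (0 : ℝ) 1)
    (T : E → E) (hT : ∀ x, T x = α • x + (1 - α) • S x)
    (D : Set E) (hDC : D ⊆ C) (hD : D.Nonempty)
    (hDbd : Bornology.IsBounded D) (hTD : T '' D = D) :
    D ⊆ {x ∈ C | T x = x} ∧ {x ∈ C | T x = x} = {x ∈ C | S x = x} ∧
    ∃ x ∈ C, S x = x := by
  obtain ⟨hα0, hα1⟩ := hα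
  obtain ⟨w0, hw0⟩ := hD
  -- fixed point sets agree
  have hfix : {x ∈ C | T x = x} = {x ∈ C | S x = x} := by
    ext z
    simp only [Set.mem_setOf_eq]
    constructor
    · rintro ⟨hzC, hz⟩
      refine ⟨hzC, ?_⟩
      rw [hT] at hz
      have h0 : (1 - α) • (S z - z) = 0 := by
        calc (1 - α) • (S z - z) = (α • z + (1 - α) • S z) - z := by module
          _ = 0 := by rw [hz]; exact sub_self z
      rcases smul_eq_zero.mp h0 with h | h
      · exact absurd h (by intro h'; linarith)
      · exact sub_eq_zero.mp h
    · rintro ⟨hzC, hz⟩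
      refine ⟨hzC, ?_⟩
      rw [hT, hz]; module
  -- T maps D into D
  have hTDsub : ∀ z ∈ D, T z ∈ D := fun z hz => hTD ▸ Set.mem_image_of_mem T hz
  have hiter : ∀ z ∈ D, ∀ k : ℕ, T^[k] z ∈ D := by
    intro z hz k
    induction k with
    | zero => simpa
    | succ k ih => rw [Function.iterate_succ_apply']; exact hTDsub _ ih
  -- backward chains
  have hchain : ∀ m : ℕ, ∀ w ∈ D, ∃ z ∈ D, T^[m] z = w := by
    intro m
    induction m with
    | zero => intro w hw; exact ⟨w, hw, rfl⟩
    | succ m ih =>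
        intro w hw
        obtain ⟨z', hz', hz'w⟩ := ih w hw
        have : z' ∈ T '' D := by rw [hTD]; exact hz'
        obtain ⟨z, hz, hzz'⟩ := this
        exact ⟨z, hz, by rw [Function.iterate_succ_apply, hzz', hz'w]⟩
  -- bound on D
  obtain ⟨R, hR⟩ := Metric.isBounded_iff.mp hDbd
  have hRnorm : ∀ x ∈ D, ∀ y ∈ D, ‖x - y‖ ≤ R := fun x hx y hy => by
    rw [← dist_eq_norm]; exact hR hx hy
  have hR0 : 0 ≤ R := by
    have := hRnorm w0 hw0 w0 hw0
    simpa using le_trans (norm_nonneg _) this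
  -- the supremum of displacement
  set c : ℝ := sSup ((fun w => ‖S w - w‖) '' D) with hc
  have hbdd : BddAbove ((fun w => ‖S w - w‖) '' D) := by
    refine ⟨R + ‖S w0 - w0‖ + R, ?_⟩
    rintro _ ⟨w, hw, rfl⟩
    have h1 : ‖S w - S w0‖ ≤ ‖w - w0‖ := hne _ (hDC hw) _ (hDC hw0)
    have h2 : ‖w - w0‖ ≤ R := hRnorm _ hw _ hw0
    have h3 : ‖w0 - w‖ ≤ R := hRnorm _ hw0 _ hw
    calc ‖S w - w‖ = ‖(S w - S w0) + (S w0 - w0) + (w0 - w)‖ := by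
          congr 1; abel
      _ ≤ ‖S w - S w0‖ + ‖S w0 - w0‖ + ‖w0 - w‖ := norm_add₃_le
      _ ≤ R + ‖S w0 - w0‖ + R := by linarith
  have hcle : ∀ w ∈ D, ‖S w - w‖ ≤ c := fun w hw =>
    le_csSup hbdd ⟨w, hw, rfl⟩
  have hc0 : 0 ≤ c := le_trans (norm_nonneg _) (hcle w0 hw0)
  -- main estimate: for every m and w ∈ D
  have hmain : ∀ m : ℕ, ∀ w ∈ D, ‖S w - w‖ ≤ c + α^m * (R - (1-α) * m * c) := by
    intro m w hw
    obtain ⟨z, hz, hzw⟩ := hchain m w hw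
    set x : ℕ → E := fun k => T^[k] z with hx
    have hxD : ∀ k, x k ∈ D := fun k => hiter z hz k
    have hxC : ∀ k, x k ∈ C := fun k => hDC (hxD k)
    have hstep : ∀ k, x (k+1) = T (x k) := fun k => Function.iterate_succ_apply' T k z
    have hxm : x m = w := hzw
    have hkey := aux_key C S hne α hα0 hα1 T hT x hxC hstep m 0
    simp only [Nat.zero_add] at hkey
    rw [hxm] at hkey
    have hx0 : x 0 = z := rfl
    have hcoef : α^m * (1 + (1-α)*m) ≤ 1 := aux_coef α hα0 hα1 m
    have hd0c : ‖S (x 0) - x 0‖ ≤ c := hcle _ (hxD 0)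
    have hK : (α^m * (1 + (1-α)*(m:ℝ)) - 1) * c ≤ (α^m * (1 + (1-α)*(m:ℝ)) - 1) * ‖S (x 0) - x 0‖ :=
      mul_le_mul_of_nonpos_left hd0c (by linarith)
    have hnb : ‖S w - x 0‖ ≤ c + R := by
      have h1 : ‖S w - w‖ ≤ c := hcle w hw
      have h2 : ‖w - x 0‖ ≤ R := hRnorm _ hw _ (hxD 0)
      calc ‖S w - x 0‖ = ‖(S w - w) + (w - x 0)‖ := by congr 1; abel
        _ ≤ ‖S w - w‖ + ‖w - x 0‖ := norm_add_le _ _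
        _ ≤ c + R := by linarith
    have hpow : (0:ℝ) < α^m := by positivity
    have h3 : α^m * ‖S w - x 0‖ ≤ α^m * (c + R) :=
      mul_le_mul_of_nonneg_left hnb (le_of_lt hpow)
    have hfinal : ‖S w - w‖ + (α^m * (1 + (1-α)*(m:ℝ)) - 1) * c ≤ α^m * (c + R) := by
      linarith
    nlinarith [hfinal]
  -- conclude c = 0
  have hcm : ∀ m : ℕ, (1-α) * m * c ≤ R := by
    intro m
    have h1 : c ≤ c + α^m * (R - (1-α) * m * c) := by
      refine csSup_le ⟨‖S w0 - w0‖, ⟨w0, hw0, rfl⟩⟩ ?_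
      rintro _ ⟨w, hw, rfl⟩
      exact hmain m w hw
    have hpow : (0:ℝ) < α^m := by positivity
    nlinarith
  have hceq : c ≤ 0 := by
    by_contra hcpos
    push_neg at hcpos
    obtain ⟨m, hm⟩ := exists_nat_gt (R / ((1-α) * c))
    have hlc : 0 < (1-α) * c := by nlinarith
    have : R < (1-α) * m * c := by
      rw [div_lt_iff₀ hlc] at hm
      nlinarith
    linarith [hcm m]
  -- every point of D is fixed by S
  have hSfix : ∀ w ∈ D, S w = w := by
    intro w hw
    have h1 : ‖S w - w‖ ≤ 0 := le_trans (hcle w hw) hceq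
    have h2 : ‖S w - w‖ = 0 := le_antisymm h1 (norm_nonneg _)
    exact sub_eq_zero.mp (norm_eq_zero.mp h2)
  refine ⟨?_, hfix, w0, hDC hw0, hSfix w0 hw0⟩
  intro w hw
  refine ⟨hDC hw, ?_⟩
  rw [hT, hSfix w hw]; module
end

section
/- Every commuting semigroup of continuous self-maps of a nonempty compact Hausdorff space C is subsurjective: there exists a nonempty subset D ⊆ C such that T(D) = D for every T in the semigroup. -/
open Function Set Filter Topology

/-- Every commuting semigroup of continuous self-maps of a nonempty compact
Hausdorff space is subsurjective: there is a nonempty `D` with `T(D) = D`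
for every member `T`. -/
theorem stmt9 {C : Type*} [TopologicalSpace C] [CompactSpace C] [T2Space C]
    [Nonempty C] (S : Set (C → C))
    (hcont : ∀ T ∈ S, Continuous T)
    (hcomp : ∀ T ∈ S, ∀ P ∈ S, T ∘ P ∈ S)
    (hcomm : ∀ T ∈ S, ∀ P ∈ S, T ∘ P = P ∘ T) :
    ∃ D : Set C, D.Nonempty ∧ ∀ T ∈ S, T '' D = D := by
  set F : Set (Set C) := {K | K.Nonempty ∧ IsCompact K ∧ ∀ T ∈ S, T '' K ⊆ K} with hF
  have huniv : (univ : Set C) ∈ F :=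
    ⟨univ_nonempty, isCompact_univ, fun T _ => subset_univ _⟩
  obtain ⟨D, -, hDF, hmin⟩ : ∃ m, m ⊆ univ ∧ Minimal (· ∈ F) m := by
    apply zorn_superset_nonempty F ?_ _ huniv
    intro c hcF hchain hcne
    refine ⟨⋂₀ c, ?_, fun s hs => sInter_subset_of_mem hs⟩
    have hdir : DirectedOn (· ⊇ ·) c := IsChain.directedOn hchain.symm
    have : Nonempty c := hcne.to_subtype
    refine ⟨IsCompact.nonempty_sInter_of_directed_nonempty_isCompact_isClosed hdir
      (fun U hU => (hcF hU).1) (fun U hU => (hcF hU).2.1)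
      (fun U hU => (hcF hU).2.1.isClosed), ?_, ?_⟩
    · obtain ⟨K, hK⟩ := hcne
      exact IsCompact.of_isClosed_subset (hcF hK).2.1
        (isClosed_sInter fun U hU => (hcF hU).2.1.isClosed) (sInter_subset_of_mem hK)
    · intro T hT x hx
      simp only [mem_sInter]
      intro U hU
      obtain ⟨y, hy, rfl⟩ := hx
      exact (hcF hU).2.2 T hT ⟨y, (mem_sInter.mp hy) U hU, rfl⟩
  obtain ⟨hDne, hDc, hDinv⟩ := hDF
  refine ⟨D, hDne, fun T hT => ?_⟩
  have hmem : T '' D ∈ F := by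
    refine ⟨hDne.image T, hDc.image (hcont T hT), fun P hP => ?_⟩
    rw [← image_comp, ← hcomm T hT P hP, image_comp]
    exact image_mono (hDinv P hP)
  exact subset_antisymm (hDinv T hT) (hmin hmem (hDinv T hT))
end

section
/- Let C be a nonempty compact metric space (or compact Hausdorff space) and S a commuting family of continuous uniformly asymptotically regular self-maps of C. Then S has a common fixed point. -/
open Function Set Filter Topology

/-- A commuting family of continuous uniformly asymptotically regular
self-maps of a nonempty compact metric space has a common fixed point. -/
theorem stmt11 {C : Type*} [MetricSpace C] [CompactSpace C] [Nonempty C]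
    (S : Set (C → C))
    (hcont : ∀ T ∈ S, Continuous T)
    (hcomm : ∀ T ∈ S, ∀ P ∈ S, T ∘ P = P ∘ T)
    (hUAR : ∀ T ∈ S, Tendsto
      (fun n : ℕ => ⨆ x : C, dist (T^[n + 1] x) (T^[n] x)) atTop (𝓝 0)) :
    ∃ x : C, ∀ T ∈ S, T x = x := by
  classical
  -- the set of finite compositions of elements of S
  set P : Set (C → C) :=
    {f | ∃ l : List (C → C), (∀ g ∈ l, g ∈ S) ∧ f = l.foldr (· ∘ ·) id} with hPdef
  have hid : (id : C → C) ∈ P := ⟨[], by simp, rfl⟩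
  have hcont' : ∀ f ∈ P, Continuous f := by
    rintro f ⟨l, hl, rfl⟩
    induction l with
    | nil => simpa using continuous_id
    | cons a l ih =>
      simp only [List.foldr_cons]
      exact (hcont a (hl a (by simp))).comp (ih fun g hg => hl g (by simp [hg]))
  have hcommA : ∀ T ∈ S, ∀ l : List (C → C), (∀ g ∈ l, g ∈ S) →
      T ∘ l.foldr (· ∘ ·) id = l.foldr (· ∘ ·) id ∘ T := by
    intro T hT l
    induction l with
    | nil => simp
    | cons a l ih =>
      intro hl
      have h1 : T ∘ a = a ∘ T := hcomm T hT a (hl a (by simp))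
      have h2 := ih fun g hg => hl g (by simp [hg])
      simp only [List.foldr_cons]
      calc T ∘ (a ∘ l.foldr (· ∘ ·) id) = (T ∘ a) ∘ l.foldr (· ∘ ·) id := rfl
        _ = (a ∘ T) ∘ l.foldr (· ∘ ·) id := by rw [h1]
        _ = a ∘ (T ∘ l.foldr (· ∘ ·) id) := rfl
        _ = a ∘ (l.foldr (· ∘ ·) id ∘ T) := by rw [h2]
  have hfoldr_init : ∀ (l : List (C → C)) (b : C → C),
      l.foldr (· ∘ ·) b = l.foldr (· ∘ ·) id ∘ b := by
    intro l b
    induction l with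
    | nil => rfl
    | cons a l ih => simp only [List.foldr_cons, ih]; rfl
  have hmul : ∀ f ∈ P, ∀ g ∈ P, f ∘ g ∈ P := by
    rintro f ⟨l₁, hl₁, rfl⟩ g ⟨l₂, hl₂, rfl⟩
    refine ⟨l₁ ++ l₂, ?_, ?_⟩
    · intro g hg
      rcases List.mem_append.1 hg with h | h
      · exact hl₁ g h
      · exact hl₂ g h
    · rw [List.foldr_append, hfoldr_init l₁ (l₂.foldr (· ∘ ·) id)]
  have hcommB : ∀ f ∈ P, ∀ g ∈ P, f ∘ g = g ∘ f := by
    rintro f ⟨l₁, hl₁, rfl⟩ g ⟨l₂, hl₂, rfl⟩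
    induction l₁ with
    | nil => simp
    | cons a l ih =>
      have h1 := hcommA a (hl₁ a (by simp)) l₂ hl₂
      have h2 := ih fun g hg => hl₁ g (by simp [hg])
      simp only [List.foldr_cons]
      calc (a ∘ l.foldr (· ∘ ·) id) ∘ l₂.foldr (· ∘ ·) id
          = a ∘ (l.foldr (· ∘ ·) id ∘ l₂.foldr (· ∘ ·) id) := rfl
        _ = a ∘ (l₂.foldr (· ∘ ·) id ∘ l.foldr (· ∘ ·) id) := by rw [h2]
        _ = (a ∘ l₂.foldr (· ∘ ·) id) ∘ l.foldr (· ∘ ·) id := rfl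
        _ = (l₂.foldr (· ∘ ·) id ∘ a) ∘ l.foldr (· ∘ ·) id := by rw [h1]
  have hiter : ∀ T ∈ S, ∀ n : ℕ, T^[n] ∈ P := by
    intro T hT n
    induction n with
    | zero => simpa using hid
    | succ n ih =>
      have hTP : T ∈ P := ⟨[T], by simp [hT], by simp⟩
      rw [Function.iterate_succ']
      exact hmul T hTP _ ih
  -- the core
  haveI : Nonempty P := ⟨⟨id, hid⟩⟩
  have hne : (⋂ f : P, Set.range (f : C → C)).Nonempty := by
    apply IsCompact.nonempty_iInter_of_directed_nonempty_isCompact_isClosed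
    · rintro ⟨f, hf⟩ ⟨g, hg⟩
      refine ⟨⟨f ∘ g, hmul f hf g hg⟩, ?_, ?_⟩
      · rintro x ⟨y, rfl⟩; exact ⟨g y, rfl⟩
      · rintro x ⟨y, rfl⟩
        have hfg : f ∘ g = g ∘ f := hcommB f hf g hg
        exact ⟨f y, (congrFun hfg y).symm⟩
    · exact fun f => Set.range_nonempty _
    · exact fun f => isCompact_range (hcont' f f.2)
    · exact fun f => (isCompact_range (hcont' f f.2)).isClosed
  obtain ⟨y, hy⟩ := hne
  refine ⟨y, fun T hT => ?_⟩
  have key : ∀ n : ℕ, dist (T y) y ≤ ⨆ x : C, dist (T^[n + 1] x) (T^[n] x) := by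
    intro n
    have hyn : y ∈ Set.range (T^[n]) := by
      have := Set.mem_iInter.1 hy ⟨T^[n], hiter T hT n⟩
      exact this
    obtain ⟨x, rfl⟩ := hyn
    have hb : BddAbove (Set.range fun x : C => dist (T^[n + 1] x) (T^[n] x)) := by
      have hc : Continuous fun x : C => dist (T^[n + 1] x) (T^[n] x) :=
        ((hcont T hT).iterate _).dist ((hcont T hT).iterate _)
      exact (isCompact_range hc).bddAbove
    have : dist (T (T^[n] x)) (T^[n] x) = dist (T^[n + 1] x) (T^[n] x) := by
      rw [Function.iterate_succ_apply']
    rw [this]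
    exact le_ciSup hb x
  have hd : dist (T y) y ≤ 0 := ge_of_tendsto' (hUAR T hT) key
  have : dist (T y) y = 0 := le_antisymm hd dist_nonneg
  exact dist_eq_zero.1 this
end

section
/- Let C be a nonempty bounded subset of a Banach space that is compact in some Hausdorff topology τ making each mapping continuous. If S is a commuting family of τ-continuous firmly nonexpansive (in norm) self-maps of C, then S has a common fixed point. -/
open Function Set Filter Topology

/-- Core norm lemma: if a firmly nonexpansive (with parameter 1/2) map on a
bounded set admits a full backward orbit through a point, that point is fixed. -/
lemma core_fixed {E : Type*} [NormedAddCommGroup E] [NormedSpace ℝ E]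
    (T : E → E) (D : Set E) (M : ℝ)
    (hM : ∀ p ∈ D, ∀ q ∈ D, ‖p - q‖ ≤ M)
    (hf : ∀ x ∈ D, ∀ y ∈ D,
      ‖T x - T y‖ ≤ ‖(1/2 : ℝ) • (x - y) + (1/2 : ℝ) • (T x - T y)‖)
    (x : ℕ → E) (hx : ∀ k, x k ∈ D) (hT : ∀ k, T (x (k+1)) = x k) :
    T (x 0) = x 0 := by
  -- nonexpansiveness
  have hne : ∀ u ∈ D, ∀ v ∈ D, ‖T u - T v‖ ≤ ‖u - v‖ := by
    intro u hu v hv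
    have h := hf u hu v hv
    have h2 : ‖(1/2 : ℝ) • (u - v) + (1/2 : ℝ) • (T u - T v)‖
        ≤ (1/2) * ‖u - v‖ + (1/2) * ‖T u - T v‖ := by
      refine (norm_add_le _ _).trans ?_
      rw [norm_smul, norm_smul]
      norm_num
    linarith
  -- key inequality
  have hkey : ∀ u ∈ D, ∀ v ∈ D,
      2 * ‖T u - T v‖ ≤ ‖(u - v) + (T u - T v)‖ := by
    intro u hu v hv
    have h := hf u hu v hv
    have e : (1/2 : ℝ) • (u - v) + (1/2 : ℝ) • (T u - T v)
        = (1/2 : ℝ) • ((u - v) + (T u - T v)) := by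
      rw [smul_add]
    rw [e, norm_smul] at h
    have : ‖(1/2 : ℝ)‖ = 1/2 := by
      rw [Real.norm_eq_abs]; norm_num
    rw [this] at h
    linarith
  -- the displacement sequence
  set δ : ℕ → ℝ := fun k => Nat.casesOn k ‖x 0 - T (x 0)‖ (fun j => ‖x (j+1) - x j‖)
    with hδdef
  have hδ0 : δ 0 = ‖x 0 - T (x 0)‖ := rfl
  have hδs : ∀ j, δ (j+1) = ‖x (j+1) - x j‖ := fun j => rfl
  have hδnonneg : ∀ k, 0 ≤ δ k := by
    intro k
    cases k with
    | zero => rw [hδ0]; exact norm_nonneg _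
    | succ j => rw [hδs]; exact norm_nonneg _
  have hδmono : Monotone δ := by
    apply monotone_nat_of_le_succ
    intro k
    cases k with
    | zero =>
      rw [hδ0, hδs]
      calc ‖x 0 - T (x 0)‖ = ‖T (x 1) - T (x 0)‖ := by rw [hT 0]
        _ ≤ ‖x 1 - x 0‖ := hne _ (hx 1) _ (hx 0)
    | succ j =>
      rw [hδs, hδs]
      calc ‖x (j+1) - x j‖ = ‖T (x (j+2)) - T (x (j+1))‖ := by rw [hT (j+1), hT j]
        _ ≤ ‖x (j+2) - x (j+1)‖ := hne _ (hx (j+2)) _ (hx (j+1))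
  have hδM : ∀ k, δ k ≤ M := by
    intro k
    have h1 : δ 1 ≤ M := by
      have := hδs 0
      norm_num at this
      rw [this]; exact hM _ (hx 1) _ (hx 0)
    cases k with
    | zero => exact le_trans (hδmono (Nat.zero_le 1)) h1
    | succ j => rw [hδs]; exact hM _ (hx (j+1)) _ (hx j)
  -- upper bound on distances along the orbit
  have hupper : ∀ b l : ℕ, ‖x (b + l) - x b‖ ≤ (l : ℝ) * δ (b + l) := by
    intro b l
    induction l with
    | zero => simp
    | succ l ih =>
      have e : x (b + (l+1)) - x b = (x (b + l + 1) - x (b + l)) + (x (b + l) - x b) := by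
        have : b + (l+1) = b + l + 1 := by omega
        rw [this]; abel
      rw [e]
      have h1 : ‖x (b + l + 1) - x (b + l)‖ = δ (b + l + 1) := (hδs (b+l)).symm
      have h2 : (l : ℝ) * δ (b + l) ≤ (l : ℝ) * δ (b + l + 1) := by
        have h4 : δ (b + l) ≤ δ (b + l + 1) := hδmono (Nat.le_succ (b + l))
        have h5 : (0:ℝ) ≤ (l:ℝ) := by positivity
        exact mul_le_mul_of_nonneg_left h4 h5
      have h3 : δ (b + l + 1) = δ (b + (l+1)) := by congr 1
      calc ‖(x (b + l + 1) - x (b + l)) + (x (b + l) - x b)‖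
          ≤ ‖x (b + l + 1) - x (b + l)‖ + ‖x (b + l) - x b‖ := norm_add_le _ _
        _ ≤ δ (b + l + 1) + (l : ℝ) * δ (b + l + 1) := by
            rw [h1]
            have := ih.trans h2
            linarith
        _ = ((l : ℝ) + 1) * δ (b + (l+1)) := by rw [← h3]; ring
        _ = ((l+1 : ℕ) : ℝ) * δ (b + (l+1)) := by push_cast; ring
  -- main lower bound by induction
  have hmain : ∀ l b : ℕ, ((l : ℝ) + 1) * δ (b + 2)
      - 2^(l+1) * ((l : ℝ) + 1) * (δ (b + l + 2) - δ (b + 2))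
      ≤ ‖x (b + l + 2) - x (b + 1)‖ := by
    intro l
    induction l with
    | zero =>
      intro b
      have hnorm : ‖x (b + 0 + 2) - x (b + 1)‖ = δ (b + 0 + 2) := by
        have e1 : b + 0 + 2 = (b + 1) + 1 := by omega
        rw [e1, hδs (b+1)]
      rw [hnorm]
      have hδeq : δ (b + 0 + 2) = δ (b + 2) := by congr 1
      rw [hδeq]
      norm_num
    | succ l ih =>
      intro b
      -- key step: u = x (b+l+3), v = x (b+2)
      have hk := hkey (x (b + l + 3)) (hx _) (x (b + 2)) (hx _)
      rw [hT (b + l + 2), hT (b + 1)] at hk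
      -- hk : 2 * ‖x (b+l+2) - x (b+1)‖ ≤ ‖(x (b+l+3) - x (b+2)) + (x (b+l+2) - x (b+1))‖
      have hAB : (x (b + l + 3) - x (b + 2)) + (x (b + l + 2) - x (b + 1))
          = (x (b + l + 3) - x (b + 1)) + (x (b + l + 2) - x (b + 2)) := by abel
      have htri : ‖(x (b + l + 3) - x (b + 2)) + (x (b + l + 2) - x (b + 1))‖
          ≤ ‖x (b + l + 3) - x (b + 1)‖ + ‖x (b + l + 2) - x (b + 2)‖ := by
        rw [hAB]; exact norm_add_le _ _
      have hR : ‖x (b + l + 2) - x (b + 2)‖ ≤ (l : ℝ) * δ (b + l + 2) := by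
        have := hupper (b + 2) l
        have e : b + 2 + l = b + l + 2 := by omega
        rw [e] at this
        exact this
      have hB := ih b
      -- monotonicity facts
      have m1 : δ (b + 2) ≤ δ (b + l + 2) := hδmono (show b + 2 ≤ b + l + 2 by omega)
      have m2 : δ (b + l + 2) ≤ δ (b + l + 3) := hδmono (show b + l + 2 ≤ b + l + 3 by omega)
      have hl2 : (l : ℝ) ≤ 2^(l+2) := by
        have h1 : (l : ℝ) < 2^l := by
          exact_mod_cast Nat.lt_two_pow_self (n := l)
        have h2 : (2:ℝ)^l ≤ 2^(l+2) := by
          apply pow_le_pow_right₀ (by norm_num) (by omega)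
        linarith
      have hp : (0:ℝ) ≤ 2^(l+1) := by positivity
      have hln : (0:ℝ) ≤ (l:ℝ) := Nat.cast_nonneg l
      -- indices
      have e1 : b + (l+1) + 2 = b + l + 3 := by omega
      rw [e1]
      have epow : (2:ℝ)^(l+1+1) = 2 * 2^(l+1) := by ring
      push_cast
      rw [epow]
      -- goal: (l+2) δ(b+2) - 2*2^(l+1)*(l+2)*(δ(b+l+3) - δ(b+2)) ≤ ‖x(b+l+3) - x(b+1)‖
      nlinarith [mul_le_mul_of_nonneg_left m2 (by positivity : (0:ℝ) ≤ 2 * 2^(l+1) * ((l:ℝ)+2)),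
        mul_le_mul_of_nonneg_left m1 hln,
        mul_nonneg hp (sub_nonneg.2 m1),
        mul_nonneg (mul_nonneg hp hln) (sub_nonneg.2 m1),
        mul_le_mul_of_nonneg_right hl2 (sub_nonneg.2 m1),
        mul_nonneg (mul_nonneg hp hln) (sub_nonneg.2 m2),
        mul_nonneg hp (sub_nonneg.2 m2)]
  -- conclusion
  have hbdd : BddAbove (Set.range δ) := by
    refine ⟨M, ?_⟩
    rintro _ ⟨k, rfl⟩
    exact hδM k
  set c : ℝ := ⨆ k, δ k with hc
  have hδc : ∀ k, δ k ≤ c := fun k => le_ciSup hbdd k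
  have hMc : ∀ l : ℕ, ((l : ℝ) + 1) * c ≤ M := by
    intro l
    have key : ∀ ε : ℝ, 0 < ε → ((l : ℝ) + 1) * c ≤ M + (((l:ℝ)+1) + 2^(l+1) * ((l:ℝ)+1)) * ε := by
      intro ε hε
      have hlt : c - ε < ⨆ k, δ k := by
        have : c - ε < c := by linarith
        rw [hc] at this ⊢
        exact this
      obtain ⟨b, hb⟩ := exists_lt_of_lt_ciSup hlt
      have hb2 : c - ε < δ (b + 2) := lt_of_lt_of_le hb (hδmono (show b ≤ b + 2 by omega))
      have hb3 : δ (b + l + 2) ≤ c := hδc (b + l + 2)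
      have hmb := hmain l b
      have hMb : ‖x (b + l + 2) - x (b + 1)‖ ≤ M := hM _ (hx _) _ (hx _)
      have hp : (0:ℝ) ≤ 2^(l+1) * ((l:ℝ)+1) := by positivity
      nlinarith [mul_le_mul_of_nonneg_left (show δ (b + l + 2) - δ (b + 2) ≤ ε by linarith) hp]
    by_contra hcon
    push_neg at hcon
    set A := ((l:ℝ)+1) + 2^(l+1) * ((l:ℝ)+1) with hA
    have hApos : 0 < A := by positivity
    have := key ((((l : ℝ) + 1) * c - M) / (2 * A))
      (div_pos (by linarith) (by positivity))
    have hA2 : A * ((((l : ℝ) + 1) * c - M) / (2 * A)) = (((l : ℝ) + 1) * c - M) / 2 := by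
      field_simp
    rw [hA2] at this
    linarith
  have hc0 : 0 ≤ c := le_trans (hδnonneg 0) (hδc 0)
  have hcz : c ≤ 0 := by
    by_contra hcpos
    push_neg at hcpos
    obtain ⟨n, hn⟩ := exists_nat_gt (M / c)
    have h1 := hMc n
    have h2 : M < ((n:ℝ) + 1) * c := by
      have : M / c < (n:ℝ) + 1 := by linarith
      calc M = (M / c) * c := by field_simp
        _ < ((n:ℝ) + 1) * c := by
          apply mul_lt_mul_of_pos_right this hcpos
    linarith
  have hδ0z : δ 0 = 0 := le_antisymm (le_trans (hδc 0) hcz) (hδnonneg 0)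
  rw [hδ0] at hδ0z
  have := norm_eq_zero.mp hδ0z
  have := sub_eq_zero.mp this
  exact this.symm

/-- Topological lemma: a τ-continuous self-map of a nonempty compact set
admits a full backward orbit. -/
lemma backward_orbit {X : Type*} [TopologicalSpace X] [T2Space X]
    (K : Set X) (hK : IsCompact K) (hne : K.Nonempty)
    (f : X → X) (hm : MapsTo f K K) (hc : ContinuousOn f K) :
    ∃ x : ℕ → X, (∀ k, x k ∈ K) ∧ ∀ k, f (x (k+1)) = x k := by
  have hsub : ∀ n, f^[n] '' K ⊆ K := by
    intro n
    induction n with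
    | zero => simp
    | succ n ih =>
      rintro y ⟨z, hz, rfl⟩
      rw [Function.iterate_succ_apply']
      exact hm (ih ⟨z, hz, rfl⟩)
  have hcpt : ∀ n, IsCompact (f^[n] '' K) := by
    intro n
    induction n with
    | zero => simpa using hK
    | succ n ih =>
      have e : f^[n+1] '' K = f '' (f^[n] '' K) := by
        rw [Function.iterate_succ', Set.image_comp]
      rw [e]
      exact ih.image_of_continuousOn (hc.mono (hsub n))
  have hmono : ∀ n, f^[n+1] '' K ⊆ f^[n] '' K := by
    intro n
    have e : f^[n+1] '' K = f^[n] '' (f '' K) := by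
      rw [Function.iterate_succ, Set.image_comp]
    rw [e]
    exact Set.image_mono (Set.image_subset_iff.2 hm)
  have hKn_ne : ∀ n, (f^[n] '' K).Nonempty := fun n => hne.image _
  set Kinf : Set X := ⋂ n, f^[n] '' K with hKinf
  have hKinf_ne : Kinf.Nonempty :=
    IsCompact.nonempty_iInter_of_sequence_nonempty_isCompact_isClosed _ hmono hKn_ne
      (hcpt 0) (fun n => (hcpt n).isClosed)
  have hKinf_sub : Kinf ⊆ K := by
    intro z hz
    have := Set.mem_iInter.mp hz 0
    simpa using this
  have hsurj : ∀ y, y ∈ Kinf → ∃ z, z ∈ Kinf ∧ f z = y := by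
    intro y hy
    set A : ℕ → Set X := fun n => (f^[n] '' K) ∩ (K ∩ f ⁻¹' {y}) with hA
    have hclosed : IsClosed (K ∩ f ⁻¹' {y}) :=
      hc.preimage_isClosed_of_isClosed hK.isClosed isClosed_singleton
    have hAcpt : ∀ n, IsCompact (A n) := fun n => (hcpt n).inter_right hclosed
    have hAne : ∀ n, (A n).Nonempty := by
      intro n
      have hyn : y ∈ f^[n+1] '' K := Set.mem_iInter.mp hy (n+1)
      obtain ⟨z, hz, hfz⟩ := hyn
      refine ⟨f^[n] z, ⟨z, hz, rfl⟩, hsub n ⟨z, hz, rfl⟩, ?_⟩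
      simp only [Set.mem_preimage, Set.mem_singleton_iff]
      rw [← Function.iterate_succ_apply' f n z]
      exact hfz
    have hAmono : ∀ n, A (n+1) ⊆ A n := fun n =>
      Set.inter_subset_inter_left _ (hmono n)
    have hAinter : (⋂ n, A n).Nonempty :=
      IsCompact.nonempty_iInter_of_sequence_nonempty_isCompact_isClosed _ hAmono hAne
        (hAcpt 0) (fun n => (hAcpt n).isClosed)
    obtain ⟨z, hz⟩ := hAinter
    refine ⟨z, ?_, ?_⟩
    · rw [hKinf]
      exact Set.mem_iInter.mpr fun n => (Set.mem_iInter.mp hz n).1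
    · have := (Set.mem_iInter.mp hz 0).2.2
      simpa using this
  obtain ⟨x₀, hx₀⟩ := hKinf_ne
  choose g hg1 hg2 using hsurj
  let seq : ℕ → {z : X // z ∈ Kinf} := fun n =>
    Nat.rec ⟨x₀, hx₀⟩ (fun _ p => ⟨g p.1 p.2, hg1 p.1 p.2⟩) n
  refine ⟨fun k => (seq k).1, fun k => hKinf_sub (seq k).2, fun k => ?_⟩
  exact hg2 (seq k).1 (seq k).2

/-- The fixed point set of a map continuous on a closed set, intersected with
that set, is closed. -/
lemma closed_fix {X : Type*} [TopologicalSpace X] [T2Space X]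
    (C : Set X) (hC : IsClosed C) (T : X → X) (hT : ContinuousOn T C) :
    IsClosed (C ∩ {x | T x = x}) := by
  have e : C ∩ {x | T x = x} = C ∩ (fun x => (T x, x)) ⁻¹' (Set.diagonal X) := by
    ext z
    simp [Set.diagonal, eq_comm]
  rw [e]
  exact (hT.prodMk continuousOn_id).preimage_isClosed_of_isClosed hC isClosed_diagonal

lemma compact_fix_inter {X : Type*} [TopologicalSpace X] [T2Space X]
    (C : Set X) (hC : IsCompact C) (F : Finset (X → X))
    (hcont : ∀ P ∈ F, ContinuousOn P C) :
    IsCompact (C ∩ ⋂ P ∈ F, {x | P x = x}) := by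
  have e : C ∩ ⋂ P ∈ F, {x | P x = x} = C ∩ ⋂ P ∈ F, (C ∩ {x | P x = x}) := by
    ext z
    simp only [Set.mem_inter_iff, Set.mem_iInter, Set.mem_setOf_eq]
    constructor
    · rintro ⟨hzC, hz⟩
      exact ⟨hzC, fun P hP => ⟨hzC, hz P hP⟩⟩
    · rintro ⟨hzC, hz⟩
      exact ⟨hzC, fun P hP => (hz P hP).2⟩
  rw [e]
  exact hC.inter_right (isClosed_biInter fun P hP => closed_fix C hC.isClosed P (hcont P hP))

/-- Finite intersection property argument. -/
lemma fip_fixed {X : Type*} [TopologicalSpace X] [T2Space X]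
    (C : Set X) (hC : IsCompact C) (S : Set (X → X))
    (hcont : ∀ T ∈ S, ContinuousOn T C)
    (hfin : ∀ F : Finset (X → X), ↑F ⊆ S → (C ∩ ⋂ T ∈ F, {x | T x = x}).Nonempty) :
    ∃ x ∈ C, ∀ T ∈ S, T x = x := by
  classical
  by_contra hcon
  push_neg at hcon
  set Z : ↥S → Set X := fun T => C ∩ {x | T.1 x = x} with hZ
  have hZc : ∀ T : ↥S, IsClosed (Z T) := fun T =>
    closed_fix C hC.isClosed T.1 (hcont T.1 T.2)
  have hempty : C ∩ ⋂ T : ↥S, Z T = ∅ := by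
    by_contra hne
    obtain ⟨z, hzC, hz⟩ := Set.nonempty_iff_ne_empty.mpr hne
    obtain ⟨T, hTS, hTz⟩ := hcon z hzC
    have := Set.mem_iInter.mp hz ⟨T, hTS⟩
    exact hTz this.2
  obtain ⟨t, ht⟩ := hC.elim_finite_subfamily_closed Z hZc hempty
  have hsubS : ↑(t.image Subtype.val) ⊆ S := by
    intro P hP
    simp only [Finset.coe_image, Set.mem_image, Finset.mem_coe] at hP
    obtain ⟨q, _, rfl⟩ := hP
    exact q.2
  obtain ⟨z, hzC, hz⟩ := hfin (t.image Subtype.val) hsubS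
  have : z ∈ C ∩ ⋂ i ∈ t, Z i := by
    refine ⟨hzC, Set.mem_iInter₂.mpr fun i hi => ⟨hzC, ?_⟩⟩
    have : i.1 ∈ t.image Subtype.val := Finset.mem_image_of_mem _ hi
    exact Set.mem_iInter₂.mp hz i.1 this
  rw [ht] at this
  exact this

/-- A commuting family of `τ`-continuous, firmly nonexpansive (in norm)
self-maps of a nonempty bounded, `τ`-compact subset of a Banach space has a
common fixed point. Here `t` is a Hausdorff topology on `E` for which `C`
is compact and each member of the family is continuous on `C`. -/
theorem stmt12 {E : Type*} [NormedAddCommGroup E] [NormedSpace ℝ E]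
    [CompleteSpace E] (t : TopologicalSpace E) (ht2 : @T2Space E t)
    (C : Set E) (hCne : C.Nonempty) (hbd : Bornology.IsBounded C)
    (hcomp : @IsCompact E t C)
    (S : Set (E → E))
    (hmaps : ∀ T ∈ S, Set.MapsTo T C C)
    (hcont : ∀ T ∈ S, @ContinuousOn E E t t T C)
    (hcomm : ∀ T ∈ S, ∀ P ∈ S, ∀ x ∈ C, T (P x) = P (T x))
    (hfne : ∀ T ∈ S, ∀ x ∈ C, ∀ y ∈ C, ∀ α ∈ Set.Ioo (0 : ℝ) 1,
      ‖T x - T y‖ ≤ ‖α • (x - y) + (1 - α) • (T x - T y)‖) :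
    ∃ x ∈ C, ∀ T ∈ S, T x = x := by
  classical
  obtain ⟨M, hMd⟩ := Metric.isBounded_iff.mp hbd
  have hM : ∀ p ∈ C, ∀ q ∈ C, ‖p - q‖ ≤ M := by
    intro p hp q hq
    rw [← dist_eq_norm]
    exact hMd hp hq
  have hhalf : ∀ T ∈ S, ∀ u ∈ C, ∀ v ∈ C,
      ‖T u - T v‖ ≤ ‖(1/2 : ℝ) • (u - v) + (1/2 : ℝ) • (T u - T v)‖ := by
    intro T hT u hu v hv
    have h := hfne T hT u hu v hv (1/2) ⟨by norm_num, by norm_num⟩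
    have e : (1 - 1/2 : ℝ) = 1/2 := by norm_num
    rw [e] at h
    exact h
  -- single map fixed point on invariant compact subsets
  have single : ∀ K : Set E, K ⊆ C → @IsCompact E t K → K.Nonempty →
      ∀ T ∈ S, Set.MapsTo T K K → ∃ x ∈ K, T x = x := by
    intro K hKC hKcpt hKne T hTS hTK
    obtain ⟨x, hxK, hxT⟩ :=
      @backward_orbit E t ht2 K hKcpt hKne T hTK ((hcont T hTS).mono hKC)
    exact ⟨x 0, hxK 0,
      core_fixed T C M hM (hhalf T hTS) x (fun k => hKC (hxK k)) hxT⟩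
  -- finite intersections of fixed point sets are nonempty
  have hfin : ∀ F : Finset (E → E), ↑F ⊆ S →
      (C ∩ ⋂ T ∈ F, {x | T x = x}).Nonempty := by
    intro F
    induction F using Finset.induction_on with
    | empty => intro _; simpa using hCne
    | @insert T F hTF ih =>
      intro hsub
      have hTS : T ∈ S := hsub (by simp)
      have hFS : ↑F ⊆ S := fun P hP => hsub (by simp [Finset.mem_coe.mp hP])
      set K : Set E := C ∩ ⋂ P ∈ F, {x | P x = x} with hK
      have hKC : K ⊆ C := Set.inter_subset_left
      have hKne : K.Nonempty := ih hFS
      have hKcpt : @IsCompact E t K :=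
        @compact_fix_inter E t ht2 C hcomp F (fun P hP => hcont P (hFS hP))
      have hTK : Set.MapsTo T K K := by
        intro z hz
        have hzC : z ∈ C := hz.1
        refine ⟨hmaps T hTS hzC, Set.mem_iInter₂.mpr fun P hP => ?_⟩
        have hPz : P z = z := Set.mem_iInter₂.mp hz.2 P hP
        have hcm := hcomm T hTS P (hFS hP) z hzC
        -- hcm : T (P z) = P (T z)
        show P (T z) = T z
        rw [← hcm, hPz]
      obtain ⟨w, hwK, hwT⟩ := single K hKC hKcpt hKne T hTS hTK
      refine ⟨w, hwK.1, Set.mem_iInter₂.mpr fun P hP => ?_⟩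
      rcases Finset.mem_insert.mp hP with h | h
      · subst h; exact hwT
      · exact Set.mem_iInter₂.mp hwK.2 P h
  exact @fip_fixed E t ht2 C hcomp S hcont hfin
end

section
/- Let C be a convex bounded subset of a Banach space, S : C → C affine, α ∈ (0,1), and T = αI + (1−α)S. Then T is uniformly asymptotically regular: lim_{n→∞} sup_{x∈C} ‖T^{n+1}x − T^n x‖ = 0. -/
open Function Set Filter Topology MeasureTheory Finset intervalIntegral

namespace Stmt13Aux

noncomputable def p (α q : ℝ) (n k : ℕ) : ℝ := (n.choose k : ℝ) * α ^ (n - k) * q ^ k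

theorem p_nonneg {α q : ℝ} (hα : 0 ≤ α) (hq : 0 ≤ q) (n k : ℕ) : 0 ≤ p α q n k := by
  unfold p; positivity

theorem p_pos {α q : ℝ} (hα : 0 < α) (hq : 0 < q) {n k : ℕ} (h : k ≤ n) : 0 < p α q n k := by
  unfold p
  have := Nat.choose_pos h
  positivity

theorem p_sum {α q : ℝ} (h : α + q = 1) (n : ℕ) : ∑ k ∈ range (n + 1), p α q n k = 1 := by
  have h' : q + α = 1 := by linarith
  have h2 := add_pow q α n
  rw [h', one_pow] at h2
  calc ∑ k ∈ range (n + 1), p α q n k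
      = ∑ k ∈ range (n + 1), q ^ k * α ^ (n - k) * (n.choose k : ℝ) := by
        apply Finset.sum_congr rfl; intro k _; unfold p; ring
    _ = 1 := h2.symm

theorem p_top (n k : ℕ) (h : n < k) {α q : ℝ} : p α q n k = 0 := by
  unfold p
  rw [Nat.choose_eq_zero_of_lt h]
  simp

theorem p_pascal {α q : ℝ} (h : α + q = 1) (n k : ℕ) :
    p α q (n + 1) (k + 1) = α * p α q n (k + 1) + q * p α q n k := by
  rcases lt_trichotomy k n with hk | rfl | hk
  · unfold p
    have h2 : n - (k + 1) + 1 = n - k := by omega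
    have h3 : α ^ (n - k) = α ^ (n - (k + 1)) * α := by rw [← pow_succ, h2]
    rw [Nat.choose_succ_succ]
    simp only [Nat.succ_eq_add_one]
    push_cast
    rw [h3]
    ring
  · unfold p
    simp [Nat.choose_succ_self, Nat.sub_self, pow_succ]
    ring
  · rw [p_top _ _ (by omega), p_top _ _ (by omega), p_top _ _ (by omega)]
    ring

theorem p_zero_left {α q : ℝ} (n : ℕ) : p α q (n + 1) 0 = α * p α q n 0 := by
  unfold p; simp [pow_succ]; ring

/-- key ratio identity -/
theorem p_ratio {α q : ℝ} (n j : ℕ) (h : j < n) :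
    p α q n (j + 1) * ((j + 1 : ℕ) * α) = p α q n j * (((n - j : ℕ) : ℝ) * q) := by
  unfold p
  have h1 : (n.choose (j + 1) * (j + 1) : ℝ) = n.choose j * (n - j : ℕ) := by
    exact_mod_cast congrArg (Nat.cast : ℕ → ℝ) (Nat.choose_succ_right_eq n j)
  have h2 : n - (j + 1) + 1 = n - j := by omega
  calc (n.choose (j+1) : ℝ) * α ^ (n - (j+1)) * q ^ (j+1) * ((j+1 : ℕ) * α)
      = ((n.choose (j+1) * (j+1) : ℝ)) * (α ^ (n - (j+1)) * α) * q ^ (j+1) := by push_cast; ring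
    _ = ((n.choose j : ℝ) * (n - j : ℕ)) * α ^ (n - j) * q ^ (j+1) := by
        rw [h1, ← pow_succ, h2]
    _ = (n.choose j : ℝ) * α ^ (n - j) * q ^ j * (((n - j : ℕ) : ℝ) * q) := by
        rw [pow_succ]; ring


noncomputable def φ (α q : ℝ) (t : ℝ) : ℂ := (α : ℂ) + (q : ℂ) * Complex.exp (t * Complex.I)

theorem phi_cont (α q : ℝ) : Continuous (φ α q) := by
  unfold φ; fun_prop

theorem orth (m k : ℕ) : ∫ t in (0:ℝ)..(2 * Real.pi), Complex.exp (m * t * Complex.I) *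
    Complex.exp (-(k:ℂ) * t * Complex.I) =
    if m = k then (2 * Real.pi : ℝ) else 0 := by
  have hcomb : ∀ t : ℝ, Complex.exp (m * t * Complex.I) * Complex.exp (-(k:ℂ) * t * Complex.I)
      = Complex.exp ((((m:ℤ) - (k:ℤ) : ℤ) : ℂ) * Complex.I * t) := by
    intro t
    rw [← Complex.exp_add]
    push_cast
    ring_nf
  simp only [hcomb]
  rcases eq_or_ne m k with rfl | hne
  · simp
  · rw [if_neg hne]
    have hne' : (m:ℤ) ≠ (k:ℤ) := by exact_mod_cast hne
    have hc : (((m:ℤ) - (k:ℤ) : ℤ) : ℂ) * Complex.I ≠ 0 := by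
      simp only [ne_eq, mul_eq_zero, Complex.I_ne_zero, or_false]
      exact_mod_cast sub_ne_zero.2 hne'
    rw [integral_exp_mul_complex hc]
    have h1 : (((m:ℤ) - (k:ℤ) : ℤ) : ℂ) * Complex.I * (2 * Real.pi : ℝ)
        = ((m:ℤ) - (k:ℤ) : ℤ) * (2 * (Real.pi:ℂ) * Complex.I) := by push_cast; ring
    rw [h1, Complex.exp_int_mul_two_pi_mul_I]
    simp

theorem fourier_coef {α q : ℝ} (hα : 0 ≤ α) (hq : 0 ≤ q) (n k : ℕ) :
    ∫ t in (0:ℝ)..(2 * Real.pi), (φ α q t) ^ n * Complex.exp (-(k:ℂ) * t * Complex.I)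
      = (if k ≤ n then (p α q n k : ℂ) else 0) * (2 * Real.pi : ℝ) := by
  have hexp : ∀ t : ℝ, (φ α q t) ^ n
      = ∑ j ∈ range (n + 1), (p α q n j : ℂ) * Complex.exp (j * t * Complex.I) := by
    intro t
    unfold φ
    rw [add_comm ((α:ℂ)) _, add_pow]
    apply Finset.sum_congr rfl
    intro j _
    rw [mul_pow, ← Complex.exp_nat_mul, ← mul_assoc]
    unfold p
    push_cast
    ring
  have hInt : ∀ j : ℕ, IntervalIntegrable (fun t : ℝ =>
      (p α q n j : ℂ) * Complex.exp (j * t * Complex.I) * Complex.exp (-(k:ℂ) * t * Complex.I))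
      volume 0 (2 * Real.pi) := by
    intro j
    apply Continuous.intervalIntegrable
    fun_prop
  calc ∫ t in (0:ℝ)..(2 * Real.pi), (φ α q t) ^ n * Complex.exp (-(k:ℂ) * t * Complex.I)
      = ∫ t in (0:ℝ)..(2 * Real.pi), ∑ j ∈ range (n + 1),
          (p α q n j : ℂ) * Complex.exp (j * t * Complex.I) * Complex.exp (-(k:ℂ) * t * Complex.I) := by
        apply intervalIntegral.integral_congr
        intro t _
        dsimp only
        rw [hexp t, Finset.sum_mul]
    _ = ∑ j ∈ range (n + 1), ∫ t in (0:ℝ)..(2 * Real.pi),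
          (p α q n j : ℂ) * Complex.exp (j * t * Complex.I) * Complex.exp (-(k:ℂ) * t * Complex.I) := by
        exact intervalIntegral.integral_finset_sum (fun j _ => hInt j)
    _ = ∑ j ∈ range (n + 1), (p α q n j : ℂ) *
          ∫ t in (0:ℝ)..(2 * Real.pi), Complex.exp (j * t * Complex.I) * Complex.exp (-(k:ℂ) * t * Complex.I) := by
        apply Finset.sum_congr rfl
        intro j _
        rw [← intervalIntegral.integral_const_mul]
        congr 1; ext t; ring
    _ = (if k ≤ n then (p α q n k : ℂ) else 0) * (2 * Real.pi : ℝ) := by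
        simp only [orth]
        simp only [apply_ite (Complex.ofReal), Complex.ofReal_zero, mul_ite, mul_zero]
        rw [Finset.sum_ite_eq' (range (n+1)) k]
        simp only [Finset.mem_range, Nat.lt_succ_iff]
        split_ifs <;> simp


noncomputable def J (α q : ℝ) (n : ℕ) : ℝ := ∫ t in (0:ℝ)..(2 * Real.pi), ‖φ α q t‖ ^ n

theorem p_le {α q : ℝ} (hα : 0 ≤ α) (hq : 0 ≤ q) {n k : ℕ} (hk : k ≤ n) :
    p α q n k ≤ (2 * Real.pi)⁻¹ * J α q n := by
  have h2π : (0:ℝ) < 2 * Real.pi := by positivity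
  have h1 : (p α q n k : ℝ) * (2 * Real.pi)
      = ‖∫ t in (0:ℝ)..(2 * Real.pi), (φ α q t) ^ n * Complex.exp (-(k:ℂ) * t * Complex.I)‖ := by
    rw [fourier_coef hα hq n k, if_pos hk]
    rw [norm_mul]
    simp only [Complex.norm_real, Complex.norm_natCast]
    rw [Real.norm_eq_abs, Real.norm_eq_abs, abs_of_nonneg (p_nonneg hα hq n k),
      abs_of_nonneg h2π.le]
  have h2 : ‖∫ t in (0:ℝ)..(2 * Real.pi), (φ α q t) ^ n * Complex.exp (-(k:ℂ) * t * Complex.I)‖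
      ≤ J α q n := by
    refine le_trans (intervalIntegral.norm_integral_le_integral_norm h2π.le) ?_
    unfold J
    apply le_of_eq
    apply intervalIntegral.integral_congr
    intro t _
    dsimp only
    rw [norm_mul, norm_pow]
    have : Complex.exp (-(k:ℂ) * t * Complex.I) = Complex.exp (((-(k * t) : ℝ) : ℂ) * Complex.I) := by
      push_cast; ring_nf
    rw [this, Complex.norm_exp_ofReal_mul_I]
    ring
  calc p α q n k = (2 * Real.pi)⁻¹ * (p α q n k * (2 * Real.pi)) := by field_simp
    _ ≤ (2 * Real.pi)⁻¹ * J α q n := by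
        apply mul_le_mul_of_nonneg_left _ (by positivity)
        rw [h1]; exact h2

theorem J_tendsto {α q : ℝ} (hα : 0 < α) (hq : 0 < q) (hsum : α + q = 1) :
    Tendsto (J α q) atTop (𝓝 0) := by
  have h2π : (0:ℝ) < 2 * Real.pi := by positivity
  have hr1 : ∀ t : ℝ, ‖φ α q t‖ ≤ 1 := by
    intro t
    unfold φ
    calc ‖(α:ℂ) + (q:ℂ) * Complex.exp (t * Complex.I)‖
        ≤ ‖(α:ℂ)‖ + ‖(q:ℂ) * Complex.exp (t * Complex.I)‖ := norm_add_le _ _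
      _ = α + q := by
          rw [norm_mul]
          have ht : (t : ℂ) * Complex.I = ((t:ℝ):ℂ) * Complex.I := by norm_num
          rw [Complex.norm_real, Complex.norm_real, Complex.norm_exp_ofReal_mul_I,
            Real.norm_eq_abs, Real.norm_eq_abs, abs_of_nonneg hα.le, abs_of_nonneg hq.le, mul_one]
      _ = 1 := hsum
  have hrlt : ∀ t ∈ Ioo (0:ℝ) (2 * Real.pi), ‖φ α q t‖ < 1 := by
    intro t ht
    have hcos : Real.cos t < 1 := by
      rcases lt_or_eq_of_le (Real.cos_le_one t) with h | h
      · exact h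
      · exfalso
        obtain ⟨n, hn⟩ := (Real.cos_eq_one_iff t).1 h
        rcases lt_trichotomy n 0 with hn0 | rfl | hn0
        · nlinarith [ht.1, Real.pi_pos, (by exact_mod_cast hn0 : (n:ℝ) < 0)]
        · simp at hn; nlinarith [ht.1]
        · have : (1:ℝ) ≤ (n:ℝ) := by exact_mod_cast hn0
          nlinarith [ht.2, Real.pi_pos]
    have hsq : ‖φ α q t‖ ^ 2 < 1 := by
      unfold φ
      rw [← Complex.normSq_eq_norm_sq, Complex.normSq_apply]
      simp only [Complex.add_re, Complex.add_im, Complex.ofReal_re, Complex.ofReal_im,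
        Complex.mul_re, Complex.mul_im, Complex.exp_ofReal_mul_I_re, Complex.exp_ofReal_mul_I_im]
      nlinarith [Real.sin_sq_add_cos_sq t, hcos, mul_pos (mul_pos hα hq) (sub_pos.2 hcos), hsum, sq_nonneg q]
    nlinarith [norm_nonneg (φ α q t)]
  have key : Tendsto (fun n => ∫ t in Ioo (0:ℝ) (2*Real.pi), ‖φ α q t‖ ^ n) atTop
      (𝓝 (∫ _t in Ioo (0:ℝ) (2*Real.pi), (0:ℝ))) := by
    apply tendsto_integral_of_dominated_convergence (fun _ => (1:ℝ))
    · intro n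
      exact (((phi_cont α q).norm.pow n)).aestronglyMeasurable.restrict
    · exact integrableOn_const measure_Ioo_lt_top.ne
    · intro n
      filter_upwards with t
      rw [norm_pow, norm_norm]
      exact pow_le_one₀ (norm_nonneg _) (hr1 t)
    · filter_upwards [ae_restrict_mem measurableSet_Ioo] with t ht
      exact tendsto_pow_atTop_nhds_zero_of_lt_one (norm_nonneg _) (hrlt t ht)
  simp only [MeasureTheory.integral_zero] at key
  have heq : ∀ n : ℕ, J α q n = ∫ t in Ioo (0:ℝ) (2*Real.pi), ‖φ α q t‖ ^ n := by
    intro n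
    unfold J
    rw [intervalIntegral.integral_of_le h2π.le, integral_Ioc_eq_integral_Ioo]
  simpa only [← heq] using key


theorem tv_bound {α q : ℝ} (hα : 0 < α) (hq : 0 < q) (hsum : α + q = 1) {M : ℝ}
    (n : ℕ) (hM : ∀ k, k ≤ n → p α q n k ≤ M) :
    ∑ k ∈ range (n + 2), |p α q (n + 1) k - p α q n k| ≤ 2 * M := by
  -- the extended sequence f
  set f : ℕ → ℝ := fun k => if k = 0 then 0 else p α q n (k - 1) with hf
  have hc : ∀ k ∈ range (n + 2), |p α q (n + 1) k - p α q n k| = q * |f k - f (k + 1)| := by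
    intro k _
    match k with
    | 0 =>
      simp only [hf]
      norm_num
      rw [p_zero_left, abs_of_nonpos (by nlinarith [p_nonneg hα.le hq.le n 0]),
        abs_of_nonneg (p_nonneg hα.le hq.le n 0)]
      nlinarith [p_nonneg hα.le hq.le n 0]
    | (j + 1) =>
      simp only [hf]
      norm_num
      rw [p_pascal hsum]
      have : α * p α q n (j + 1) + q * p α q n j - p α q n (j + 1)
          = q * (p α q n j - p α q n (j + 1)) := by linear_combination (p α q n (j + 1)) * hsum
      rw [this, abs_mul, abs_of_nonneg hq.le]
  rw [Finset.sum_congr rfl hc, ← Finset.mul_sum]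
  -- the crossover point m
  set m : ℕ := max 1 (min (n + 1) ⌈q * (n + 1)⌉₊) with hm
  have hm1 : 1 ≤ m := le_max_left _ _
  have hmn : m ≤ n + 1 := by
    have : min (n + 1) ⌈q * (n + 1)⌉₊ ≤ n + 1 := min_le_left _ _
    omega
  -- increasing part
  have hinc : ∀ k, k < m → f k ≤ f (k + 1) := by
    intro k hk
    match k with
    | 0 =>
      simp only [hf]
      norm_num
      exact (p_nonneg hα.le hq.le n 0)
    | (j + 1) =>
      simp only [hf]
      norm_num
      have hjm : j + 1 < min (n + 1) ⌈q * (n + 1)⌉₊ := by omega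
      have hjn : j < n := by omega
      have hceil : (j + 1 : ℝ) < q * (n + 1) := by
        have := Nat.lt_ceil.1 (by omega : j + 1 < ⌈q * (n + 1)⌉₊)
        push_cast at this ⊢
        linarith
      have hineq : ((j + 1 : ℕ) : ℝ) * α < ((n - j : ℕ) : ℝ) * q := by
        rw [Nat.cast_sub hjn.le]
        push_cast
        nlinarith
      have hid := p_ratio (α := α) (q := q) n j hjn
      have h1 := p_pos hα hq (show j ≤ n by omega)
      have h2 := p_pos hα hq (show j + 1 ≤ n by omega)
      have hpos : (0:ℝ) < ((j + 1 : ℕ) : ℝ) * α := by positivity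
      nlinarith
  -- decreasing part
  have hdec : ∀ k, m ≤ k → k < n + 2 → f (k + 1) ≤ f k := by
    intro k hk hk2
    rcases eq_or_lt_of_le (show k ≤ n + 1 by omega) with rfl | hlt
    · simp only [hf]
      norm_num
      rw [p_top n (n + 1) (by omega)]
      exact p_nonneg hα.le hq.le n n
    · -- k ≤ n, k ≥ m ≥ 1
      have hk1 : 1 ≤ k := by omega
      have hkn : k ≤ n := by omega
      obtain ⟨j, rfl⟩ : ∃ j, k = j + 1 := ⟨k - 1, by omega⟩
      simp only [hf]
      norm_num
      have hceilc : ⌈q * (n + 1)⌉₊ ≤ j + 1 := by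
        have : min (n + 1) ⌈q * (n + 1)⌉₊ ≤ j + 1 := by omega
        rcases min_cases (n + 1) ⌈q * (n + 1)⌉₊ with ⟨h1, h2⟩ | ⟨h1, h2⟩ <;> omega
      have hceil : q * (n + 1) ≤ (j + 1 : ℝ) := by
        have := Nat.ceil_le.1 hceilc
        push_cast at this ⊢
        linarith
      have hjn : j < n := by omega
      have hineq : ((n - j : ℕ) : ℝ) * q ≤ ((j + 1 : ℕ) : ℝ) * α := by
        rw [Nat.cast_sub hjn.le]
        push_cast
        nlinarith
      have hid := p_ratio (α := α) (q := q) n j hjn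
      have h1 := p_pos hα hq (show j ≤ n by omega)
      have h2 := p_pos hα hq (show j + 1 ≤ n by omega)
      have hpos : (0:ℝ) < ((j + 1 : ℕ) : ℝ) * α := by positivity
      nlinarith
  -- split and telescope
  have hsplit : ∑ k ∈ range (n + 2), |f k - f (k + 1)| = 2 * f m := by
    rw [Finset.range_eq_Ico, ← Finset.sum_Ico_consecutive _ (Nat.zero_le m) (by omega : m ≤ n + 2)]
    have e1 : ∑ k ∈ Finset.Ico 0 m, |f k - f (k + 1)| = f m - f 0 := by
      rw [← Finset.range_eq_Ico]
      rw [Finset.sum_congr rfl (fun k hk => by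
        rw [abs_of_nonpos (by linarith [hinc k (Finset.mem_range.1 hk)]), neg_sub])]
      exact Finset.sum_range_sub f m
    have e2 : ∑ k ∈ Finset.Ico m (n + 2), |f k - f (k + 1)| = f m - f (n + 2) := by
      rw [Finset.sum_congr rfl (fun k hk => by
        rw [abs_of_nonneg (by linarith [hdec k (Finset.mem_Ico.1 hk).1 (Finset.mem_Ico.1 hk).2])])]
      rw [Finset.sum_Ico_eq_sum_range]
      have := Finset.sum_range_sub' (fun i => f (m + i)) (n + 2 - m)
      rw [Finset.sum_congr rfl (fun i _ => by rw [show m + i + 1 = m + (i + 1) by omega]), this,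
        show m + (n + 2 - m) = n + 2 by omega, Nat.add_zero]
    have hf0 : f 0 = 0 := by simp [hf]
    have hfn2 : f (n + 2) = 0 := by
      simp only [hf]
      norm_num
      exact p_top n (n + 1) (by omega)
    rw [e1, e2, hf0, hfn2]
    ring
  rw [hsplit]
  have hfm : f m ≤ M := by
    simp only [hf]
    rw [if_neg (by omega)]
    exact hM (m - 1) (by omega)
  have hfm0 : 0 ≤ f m := by
    simp only [hf]; rw [if_neg (by omega)]; exact p_nonneg hα.le hq.le n (m - 1)
  nlinarith


variable {E : Type*} [NormedAddCommGroup E] [NormedSpace ℝ E]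

theorem affine_sum {C : Set E} (hconv : Convex ℝ C) (S : E → E)
    (haff : ∀ x ∈ C, ∀ y ∈ C, ∀ lam ∈ Set.Icc (0 : ℝ) 1,
      S (lam • x + (1 - lam) • y) = lam • S x + (1 - lam) • S y)
    {ι : Type*} (t : Finset ι) :
    ∀ (w : ι → ℝ) (y : ι → E), (∀ i ∈ t, 0 ≤ w i) → (∑ i ∈ t, w i = 1) →
      (∀ i ∈ t, y i ∈ C) → S (∑ i ∈ t, w i • y i) = ∑ i ∈ t, w i • S (y i) := by
  classical
  induction t using Finset.induction_on with
  | empty => intro w y _ hsum _; simp at hsum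
  | @insert a s ha IH =>
    intro w y hw hsum hy
    rw [Finset.sum_insert ha, Finset.sum_insert ha]
    have hwa : 0 ≤ w a := hw a (Finset.mem_insert_self a s)
    have hsum' : ∑ i ∈ s, w i = 1 - w a := by
      rw [Finset.sum_insert ha] at hsum; linarith
    have hwa1 : w a ≤ 1 := by
      have : 0 ≤ ∑ i ∈ s, w i :=
        Finset.sum_nonneg (fun i hi => hw i (Finset.mem_insert_of_mem hi))
      linarith
    rcases eq_or_lt_of_le hwa1 with heq | hlt
    · -- w a = 1, the rest vanish
      have hz : ∀ i ∈ s, w i = 0 := by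
        intro i hi
        have h1 : ∑ j ∈ s, w j = 0 := by rw [hsum', heq]; ring
        have := Finset.sum_eq_zero_iff_of_nonneg
          (fun j hj => hw j (Finset.mem_insert_of_mem hj))
        exact (this.1 h1) i hi
      have hz1 : ∑ i ∈ s, w i • y i = 0 :=
        Finset.sum_eq_zero (fun i hi => by rw [hz i hi, zero_smul])
      have hz2 : ∑ i ∈ s, w i • S (y i) = 0 :=
        Finset.sum_eq_zero (fun i hi => by rw [hz i hi, zero_smul])
      rw [hz1, hz2, heq]
      simp
    · -- w a < 1
      set c := 1 - w a with hcdef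
      have hc : 0 < c := by simp [hcdef]; linarith
      set w' : ι → ℝ := fun i => w i / c with hw'
      set z := ∑ i ∈ s, w' i • y i with hz
      have hw'n : ∀ i ∈ s, 0 ≤ w' i :=
        fun i hi => div_nonneg (hw i (Finset.mem_insert_of_mem hi)) hc.le
      have hw's : ∑ i ∈ s, w' i = 1 := by
        rw [hw']
        rw [← Finset.sum_div, hsum']
        field_simp
      have hys : ∀ i ∈ s, y i ∈ C := fun i hi => hy i (Finset.mem_insert_of_mem hi)
      have hzC : z ∈ C := hconv.sum_mem hw'n hw's hys
      have hrw : ∑ i ∈ s, w i • y i = c • z := by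
        rw [hz, Finset.smul_sum]
        apply Finset.sum_congr rfl
        intro i hi
        rw [smul_smul, hw']
        simp only
        rw [mul_div_cancel₀]
        exact hc.ne'
      have hSz := IH w' y hw'n hw's hys
      have haC : y a ∈ C := hy a (Finset.mem_insert_self a s)
      have key := haff (y a) haC z hzC (w a) ⟨hwa, hwa1⟩
      rw [hrw, hcdef]
      rw [key, hSz, ← hcdef]
      rw [Finset.smul_sum]
      congr 1
      apply Finset.sum_congr rfl
      intro i hi
      rw [smul_smul, hw']
      simp only
      rw [mul_div_cancel₀]
      exact hc.ne'

theorem sum_pascal {α q : ℝ} (hsum : α + q = 1) (n : ℕ) (y : ℕ → E) :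
    ∑ k ∈ range (n + 2), p α q (n+1) k • y k
      = α • (∑ k ∈ range (n + 1), p α q n k • y k)
        + q • (∑ k ∈ range (n + 1), p α q n k • y (k+1)) := by
  have e1 : ∑ k ∈ range (n + 2), p α q (n+1) k • y k
      = (∑ k ∈ range (n + 1), p α q (n+1) (k+1) • y (k+1)) + p α q (n+1) 0 • y 0 :=
    Finset.sum_range_succ' _ _
  have e2 : ∑ k ∈ range (n + 1), p α q (n+1) (k+1) • y (k+1)
      = (∑ k ∈ range (n + 1), α • (p α q n (k+1) • y (k+1)))
        + ∑ k ∈ range (n + 1), q • (p α q n k • y (k+1)) := by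
    rw [← Finset.sum_add_distrib]
    exact Finset.sum_congr rfl (fun k _ => by rw [p_pascal hsum, add_smul, smul_smul, smul_smul])
  have e3 : ∑ k ∈ range (n + 1), α • (p α q n k • y k)
      = (∑ k ∈ range n, α • (p α q n (k+1) • y (k+1))) + α • (p α q n 0 • y 0) :=
    Finset.sum_range_succ' _ _
  have e4 : ∑ k ∈ range (n + 1), α • (p α q n (k+1) • y (k+1))
      = (∑ k ∈ range n, α • (p α q n (k+1) • y (k+1))) + α • (p α q n (n+1) • y (n+1)) :=
    Finset.sum_range_succ _ _
  have e5 : α • (p α q n (n+1) • y (n+1)) = (0 : E) := by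
    rw [p_top n (n+1) (by omega)]; simp
  have e6 : p α q (n+1) 0 • y 0 = α • (p α q n 0 • y 0) := by
    rw [p_zero_left, smul_smul]
  rw [Finset.smul_sum, Finset.smul_sum, e1, e2, e6, e3, e4, e5, add_zero]
  abel

theorem iterate_expand {C : Set E} (hconv : Convex ℝ C) (S : E → E) (hSC : Set.MapsTo S C C)
    (haff : ∀ x ∈ C, ∀ y ∈ C, ∀ lam ∈ Set.Icc (0 : ℝ) 1,
      S (lam • x + (1 - lam) • y) = lam • S x + (1 - lam) • S y)
    {α q : ℝ} (hα : 0 < α) (hq : 0 < q) (hsum : α + q = 1)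
    (n : ℕ) {x : E} (hx : x ∈ C) :
    (fun y => α • y + q • S y)^[n] x = ∑ k ∈ range (n + 1), p α q n k • S^[k] x := by
  set T : E → E := fun y => α • y + q • S y with hT
  have hTC : Set.MapsTo T C C := by
    intro y hy
    have := hconv hy (hSC hy) hα.le hq.le hsum
    simpa [hT] using this
  induction n with
  | zero =>
    simp [p]
  | succ n IH =>
    have hTn : T^[n] x ∈ C := Set.MapsTo.iterate hTC n hx
    have hSk : ∀ k : ℕ, S^[k] x ∈ C := fun k => Set.MapsTo.iterate hSC k hx
    rw [Function.iterate_succ_apply', IH]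
    have hS : S (∑ k ∈ range (n + 1), p α q n k • S^[k] x)
        = ∑ k ∈ range (n + 1), p α q n k • S^[k+1] x := by
      rw [affine_sum hconv S haff (range (n + 1)) (fun k => p α q n k) (fun k => S^[k] x)
        (fun k _ => p_nonneg hα.le hq.le n k) (p_sum hsum n) (fun k _ => hSk k)]
      apply Finset.sum_congr rfl
      intro k _
      rw [Function.iterate_succ_apply']
    show α • (∑ k ∈ range (n + 1), p α q n k • S^[k] x)
        + q • S (∑ k ∈ range (n + 1), p α q n k • S^[k] x) = _
    rw [hS]
    exact (sum_pascal hsum n (fun k => S^[k] x)).symm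


end Stmt13Aux

open Stmt13Aux in
/-- Anzai–Ishikawa: the averaged map `T = αI + (1-α)S` of an affine mapping
`S` on a convex bounded subset of a Banach space is uniformly asymptotically
regular. -/
theorem stmt13 {E : Type*} [NormedAddCommGroup E] [NormedSpace ℝ E]
    [CompleteSpace E] (C : Set E) (hconv : Convex ℝ C)
    (hbd : Bornology.IsBounded C)
    (S : E → E) (hSC : Set.MapsTo S C C)
    (haff : ∀ x ∈ C, ∀ y ∈ C, ∀ lam ∈ Set.Icc (0 : ℝ) 1,
      S (lam • x + (1 - lam) • y) = lam • S x + (1 - lam) • S y)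
    (α : ℝ) (hα : α ∈ Set.Ioo (0 : ℝ) 1) :
    Tendsto (fun n : ℕ => ⨆ x : C,
      ‖(fun x => α • x + (1 - α) • S x)^[n + 1] (x : E) -
        (fun x => α • x + (1 - α) • S x)^[n] (x : E)‖)
      atTop (𝓝 0) := by
  obtain ⟨hα0, hα1⟩ := hα
  set q : ℝ := 1 - α with hqdef
  have hq : 0 < q := by rw [hqdef]; linarith
  have hsum : α + q = 1 := by rw [hqdef]; ring
  obtain ⟨D, hD⟩ := Metric.isBounded_iff.1 hbd
  set D' : ℝ := max D 0 with hD'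
  have hJ0 : ∀ n : ℕ, 0 ≤ J α q n := by
    intro n
    apply intervalIntegral.integral_nonneg (by positivity)
    intro t _
    positivity
  set B : ℕ → ℝ := fun n => D' * (2 * ((2 * Real.pi)⁻¹ * J α q n)) with hB
  have hBnn : ∀ n, 0 ≤ B n := by
    intro n
    exact mul_nonneg (le_max_right D 0)
      (mul_nonneg (by norm_num) (mul_nonneg (by positivity) (hJ0 n)))
  have key : ∀ n : ℕ, ∀ x : E, x ∈ C →
      ‖(fun y => α • y + q • S y)^[n + 1] x - (fun y => α • y + q • S y)^[n] x‖ ≤ B n := by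
    intro n x hx
    have hSk : ∀ k : ℕ, S^[k] x ∈ C := fun k => Set.MapsTo.iterate hSC k hx
    rw [iterate_expand hconv S hSC haff hα0 hq hsum (n+1) hx,
       iterate_expand hconv S hSC haff hα0 hq hsum n hx]
    have hext : ∑ k ∈ Finset.range (n + 1), p α q n k • S^[k] x
        = ∑ k ∈ Finset.range (n + 2), p α q n k • S^[k] x := by
      rw [Finset.sum_range_succ (fun k => p α q n k • S^[k] x) (n+1), p_top n (n+1) (by omega),
        zero_smul, add_zero]
    rw [hext, ← Finset.sum_sub_distrib]
    simp only [← sub_smul]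
    have hcs : ∑ k ∈ Finset.range (n + 2), (p α q (n+1) k - p α q n k) = 0 := by
      rw [Finset.sum_sub_distrib, p_sum hsum (n+1)]
      have : ∑ k ∈ Finset.range (n + 2), p α q n k = 1 := by
        rw [Finset.sum_range_succ, p_top n (n+1) (by omega), add_zero, p_sum hsum n]
      rw [this]; ring
    have hcenter : ∑ k ∈ Finset.range (n + 2), (p α q (n+1) k - p α q n k) • S^[k] x
        = ∑ k ∈ Finset.range (n + 2), (p α q (n+1) k - p α q n k) • (S^[k] x - x) := by
      rw [Finset.sum_congr rfl (fun k _ => smul_sub (p α q (n+1) k - p α q n k) (S^[k] x) x),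
        Finset.sum_sub_distrib, ← Finset.sum_smul, hcs, zero_smul, sub_zero]
    rw [hcenter]
    have hMk : ∀ k, k ≤ n → p α q n k ≤ (2 * Real.pi)⁻¹ * J α q n :=
      fun k hk => p_le hα0.le hq.le hk
    calc ‖∑ k ∈ Finset.range (n + 2), (p α q (n+1) k - p α q n k) • (S^[k] x - x)‖
        ≤ ∑ k ∈ Finset.range (n + 2), ‖(p α q (n+1) k - p α q n k) • (S^[k] x - x)‖ :=
          norm_sum_le _ _
      _ ≤ ∑ k ∈ Finset.range (n + 2), |p α q (n+1) k - p α q n k| * D' := by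
          apply Finset.sum_le_sum
          intro k _
          rw [norm_smul, Real.norm_eq_abs]
          apply mul_le_mul_of_nonneg_left _ (abs_nonneg _)
          rw [← dist_eq_norm]
          exact le_trans (hD (hSk k) hx) (le_max_left _ _)
      _ = (∑ k ∈ Finset.range (n + 2), |p α q (n+1) k - p α q n k|) * D' :=
          (Finset.sum_mul _ _ _).symm
      _ ≤ (2 * ((2 * Real.pi)⁻¹ * J α q n)) * D' := by
          apply mul_le_mul_of_nonneg_right _ (le_max_right _ _)
          exact tv_bound hα0 hq hsum n hMk
      _ = B n := by rw [hB]; ring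
  refine squeeze_zero (fun n => Real.iSup_nonneg (fun x => norm_nonneg _))
    (fun n => Real.iSup_le (fun x => key n x.1 x.2) (hBnn n)) ?_
  have hJt := J_tendsto hα0 hq hsum
  have : Tendsto B atTop (𝓝 (D' * (2 * ((2 * Real.pi)⁻¹ * 0)))) := by
    apply Tendsto.const_mul
    apply Tendsto.const_mul
    exact Tendsto.const_mul _ hJt
  simpa using this
end

section
/- For T = (1/2)(I + S) with S : C → C affine on a convex set C, one has the expansion T^n = Σ_{k=0}^n C(n,k) 2^{−n} S^k, and consequently ‖T^n x − T^{n+1} x‖ ≤ a_n · diam C for all x ∈ C, where a_n = 2^{−(n+1)} C(n, ⌊(n+1)/2⌋). -/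
open Function Set Filter Topology Finset

lemma choose_inc_aux (n j : ℕ) (h : 2 * j + 1 ≤ n) : n.choose j ≤ n.choose (j + 1) := by
  have hkey := Nat.choose_succ_right_eq n j
  have h2 : j + 1 ≤ n - j := by omega
  have : n.choose j * (j + 1) ≤ n.choose (j + 1) * (j + 1) := by
    calc n.choose j * (j + 1) ≤ n.choose j * (n - j) := Nat.mul_le_mul_left _ h2
      _ = n.choose (j + 1) * (j + 1) := hkey.symm
  exact Nat.le_of_mul_le_mul_right this (Nat.succ_pos j)

lemma choose_dec_aux (n j : ℕ) (h : n ≤ 2 * j) : n.choose (j + 1) ≤ n.choose j := by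
  have hkey := Nat.choose_succ_right_eq n j
  have h2 : n - j ≤ j + 1 := by omega
  have : n.choose (j + 1) * (j + 1) ≤ n.choose j * (j + 1) := by
    calc n.choose (j + 1) * (j + 1) = n.choose j * (n - j) := hkey
      _ ≤ n.choose j * (j + 1) := Nat.mul_le_mul_left _ h2
  exact Nat.le_of_mul_le_mul_right this (Nat.succ_pos j)

/-- For `T = (1/2)(I + S)` with `S` affine on a convex bounded set `C`:
the binomial expansion `T^n = Σ_k C(n,k) 2^{-n} S^k` holds on `C`, and
`‖T^n x − T^{n+1} x‖ ≤ a_n · diam C` where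
`a_n = 2^{-(n+1)} C(n, ⌊(n+1)/2⌋)`. -/
theorem stmt14 {E : Type*} [NormedAddCommGroup E] [NormedSpace ℝ E]
    [CompleteSpace E] (C : Set E) (hconv : Convex ℝ C)
    (hbd : Bornology.IsBounded C)
    (S : E → E) (hSC : Set.MapsTo S C C)
    (haff : ∀ x ∈ C, ∀ y ∈ C, ∀ lam ∈ Set.Icc (0 : ℝ) 1,
      S (lam • x + (1 - lam) • y) = lam • S x + (1 - lam) • S y)
    (T : E → E) (hT : ∀ x, T x = (1 / 2 : ℝ) • (x + S x)) :
    (∀ n : ℕ, ∀ x ∈ C,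
      T^[n] x = ∑ k ∈ Finset.range (n + 1),
        ((n.choose k : ℝ) / 2 ^ n) • S^[k] x) ∧
    (∀ n : ℕ, ∀ x ∈ C,
      ‖T^[n] x - T^[n + 1] x‖ ≤
        ((n.choose ((n + 1) / 2) : ℝ) / 2 ^ (n + 1)) * Metric.diam C) := by
  have hTC : Set.MapsTo T C C := by
    intro x hx
    have h := hconv hx (hSC hx) (by norm_num : (0:ℝ) ≤ 1/2)
      (by norm_num : (0:ℝ) ≤ 1/2) (by norm_num)
    rw [hT, smul_add]
    exact h
  have hSit : ∀ k : ℕ, Set.MapsTo S^[k] C C := fun k => hSC.iterate k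
  have iterAff : ∀ k : ℕ, ∀ x ∈ C, ∀ y ∈ C, ∀ lam ∈ Set.Icc (0:ℝ) 1,
      S^[k] (lam • x + (1 - lam) • y) = lam • S^[k] x + (1 - lam) • S^[k] y := by
    intro k
    induction k with
    | zero => intro x _ y _ lam _; simp
    | succ k ih =>
      intro x hx y hy lam hlam
      rw [Function.iterate_succ_apply', Function.iterate_succ_apply',
        Function.iterate_succ_apply', ih x hx y hy lam hlam]
      exact haff _ (hSit k hx) _ (hSit k hy) lam hlam
  have key : ∀ n : ℕ, ∀ x ∈ C,
      T^[n] x = ∑ k ∈ Finset.range (n + 1), ((n.choose k : ℝ) / 2 ^ n) • S^[k] x := by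
    intro n
    induction n with
    | zero => intro x _; simp
    | succ n ih =>
      intro x hx
      have hTx : T x ∈ C := hTC hx
      rw [Function.iterate_succ_apply, ih (T x) hTx]
      have hTx2 : T x = (1/2 : ℝ) • x + (1 - (1/2:ℝ)) • S x := by
        rw [hT, smul_add]; norm_num
      have hSk : ∀ k : ℕ, S^[k] (T x) = ((1:ℝ)/2) • S^[k] x + ((1:ℝ)/2) • S^[k+1] x := by
        intro k
        rw [hTx2, iterAff k x hx (S x) (hSC hx) (1/2) (by constructor <;> norm_num),
          ← Function.iterate_succ_apply]
        norm_num
      calc ∑ k ∈ Finset.range (n + 1), ((n.choose k : ℝ) / 2 ^ n) • S^[k] (T x)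
          = ∑ k ∈ Finset.range (n + 1),
              (((n.choose k : ℝ) / 2 ^ (n+1)) • S^[k] x
                + ((n.choose k : ℝ) / 2 ^ (n+1)) • S^[k+1] x) := by
            refine Finset.sum_congr rfl fun k _ => ?_
            rw [hSk k, smul_add, smul_smul, smul_smul]
            ring_nf
        _ = ∑ k ∈ Finset.range (n + 1), ((n.choose k : ℝ) / 2 ^ (n+1)) • S^[k] x
            + ∑ k ∈ Finset.range (n + 1), ((n.choose k : ℝ) / 2 ^ (n+1)) • S^[k+1] x := by
            rw [Finset.sum_add_distrib]
        _ = ∑ k ∈ Finset.range (n + 1 + 1), (((n+1).choose k : ℝ) / 2 ^ (n+1)) • S^[k] x := by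
            rw [Finset.sum_range_succ' (fun k => (((n+1).choose k : ℝ) / 2 ^ (n+1)) • S^[k] x)]
            have hb : ∀ k, (((n+1).choose (k+1) : ℝ) / 2 ^ (n+1)) • S^[k+1] x
                = ((n.choose k : ℝ) / 2 ^ (n+1)) • S^[k+1] x
                  + ((n.choose (k+1) : ℝ) / 2 ^ (n+1)) • S^[k+1] x := by
              intro k
              rw [← add_smul]
              congr 1
              rw [Nat.choose_succ_succ]
              push_cast
              ring
            rw [Finset.sum_congr rfl fun k _ => hb k, Finset.sum_add_distrib]
            have h1 : ∑ k ∈ Finset.range (n+1), ((n.choose (k+1) : ℝ) / 2 ^ (n+1)) • S^[k+1] x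
                = ∑ k ∈ Finset.range n, ((n.choose (k+1) : ℝ) / 2 ^ (n+1)) • S^[k+1] x := by
              rw [Finset.sum_range_succ]
              simp [Nat.choose_succ_self]
            have h2 : ∑ k ∈ Finset.range (n+1), ((n.choose k : ℝ) / 2 ^ (n+1)) • S^[k] x
                = ∑ k ∈ Finset.range n, ((n.choose (k+1) : ℝ) / 2 ^ (n+1)) • S^[k+1] x
                  + ((n.choose 0 : ℝ) / 2 ^ (n+1)) • S^[0] x := by
              exact Finset.sum_range_succ' _ n
            rw [h1, h2]
            simp only [Nat.choose_zero_right, Function.iterate_zero_apply]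
            abel
  refine ⟨key, ?_⟩
  intro n x hx
  set M := (n + 1) / 2 with hM
  set v : ℕ → E := fun k => S^[k] x with hv
  set g : ℕ → ℝ := fun k => if k = 0 then 0 else (n.choose (k-1) : ℝ) / 2 ^ (n+1) with hgdef
  have hg : ∀ k : ℕ, g (k+1) = (n.choose k : ℝ) / 2 ^ (n+1) := by
    intro k; simp [hgdef]
  have hvC : ∀ k, v k ∈ C := fun k => hSit k hx
  -- the difference as a signed combination
  have hd : T^[n] x - T^[n + 1] x = ∑ k ∈ Finset.range (n+2), (g (k+1) - g k) • v k := by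
    rw [key n x hx, key (n+1) x hx]
    have h1 : ∑ k ∈ Finset.range (n+1), ((n.choose k : ℝ) / 2 ^ n) • v k
        = ∑ k ∈ Finset.range (n+2), ((n.choose k : ℝ) / 2 ^ n) • v k := by
      rw [Finset.sum_range_succ _ (n+1)]
      simp [Nat.choose_succ_self]
    rw [h1, ← Finset.sum_sub_distrib]
    refine Finset.sum_congr rfl fun k _ => ?_
    rw [← sub_smul]
    congr 1
    rw [hg k]
    match k with
    | 0 =>
      simp only [hgdef, if_pos rfl, Nat.choose_zero_right]
      push_cast
      rw [pow_succ]
      ring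
    | Nat.succ j =>
      rw [hg j, Nat.choose_succ_succ]
      push_cast
      rw [pow_succ]
      ring
  have hchoosepos : 0 < (n.choose M : ℝ) := by
    have : M ≤ n := by omega
    exact_mod_cast Nat.choose_pos this
  set α : ℝ := (n.choose M : ℝ) / 2 ^ (n+1) with hα
  have hαpos : 0 < α := by positivity
  -- nonnegativity of increments up to M
  have hinc : ∀ k ∈ Finset.range (M+1), 0 ≤ g (k+1) - g k := by
    intro k hk
    rw [Finset.mem_range] at hk
    match k with
    | 0 =>
      rw [hg 0]
      simp only [hgdef, if_pos rfl, sub_zero]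
      positivity
    | Nat.succ j =>
      rw [hg (j+1), hg j, sub_nonneg, div_le_div_iff_of_pos_right (by positivity)]
      have : 2 * j + 1 ≤ n := by omega
      exact_mod_cast choose_inc_aux n j this
  have hdec : ∀ k ∈ Finset.Ico (M+1) (n+2), 0 ≤ -(g (k+1) - g k) := by
    intro k hk
    rw [Finset.mem_Ico] at hk
    match k, hk with
    | Nat.succ j, hk =>
      rw [hg (j+1), hg j, neg_sub, sub_nonneg, div_le_div_iff_of_pos_right (by positivity)]
      have : n ≤ 2 * j := by omega
      exact_mod_cast choose_dec_aux n j this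
  -- telescoping sums
  have hsumpos : ∑ k ∈ Finset.range (M+1), (g (k+1) - g k) = α := by
    rw [Finset.sum_range_sub g (M+1), hg M]
    simp [hgdef]
    exact hα.symm
  have hsumall : ∑ k ∈ Finset.range (n+2), (g (k+1) - g k) = 0 := by
    rw [Finset.sum_range_sub g (n+2), hg (n+1)]
    simp [hgdef, Nat.choose_succ_self]
  have hMn : M + 1 ≤ n + 2 := by omega
  have hsplitw : ∑ k ∈ Finset.range (M+1), (g (k+1) - g k)
      + ∑ k ∈ Finset.Ico (M+1) (n+2), (g (k+1) - g k)
      = ∑ k ∈ Finset.range (n+2), (g (k+1) - g k) := by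
    rw [Finset.range_eq_Ico, Finset.range_eq_Ico]
    exact Finset.sum_Ico_consecutive _ (Nat.zero_le _) hMn
  have hsumneg : ∑ k ∈ Finset.Ico (M+1) (n+2), -(g (k+1) - g k) = α := by
    rw [Finset.sum_neg_distrib]
    have : ∑ k ∈ Finset.Ico (M+1) (n+2), (g (k+1) - g k) = -α := by
      have := hsplitw
      rw [hsumpos, hsumall] at this
      linarith
    rw [this, neg_neg]
  -- split the vector sum
  have hsplit : ∑ k ∈ Finset.range (n+2), (g (k+1) - g k) • v k
      = ∑ k ∈ Finset.range (M+1), (g (k+1) - g k) • v k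
        + ∑ k ∈ Finset.Ico (M+1) (n+2), (g (k+1) - g k) • v k := by
    rw [Finset.range_eq_Ico, Finset.range_eq_Ico]
    exact (Finset.sum_Ico_consecutive _ (Nat.zero_le _) hMn).symm
  -- positive part is α • y with y ∈ C
  set y : E := (Finset.range (M+1)).centerMass (fun k => g (k+1) - g k) v with hy
  have hyC : y ∈ C := hconv.centerMass_mem hinc (by rw [hsumpos]; exact hαpos) fun i _ => hvC i
  have hpy : ∑ k ∈ Finset.range (M+1), (g (k+1) - g k) • v k = α • y := by
    rw [hy, Finset.centerMass, hsumpos, smul_smul, mul_inv_cancel₀ (ne_of_gt hαpos), one_smul]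
  set z : E := (Finset.Ico (M+1) (n+2)).centerMass (fun k => -(g (k+1) - g k)) v with hz
  have hzC : z ∈ C := hconv.centerMass_mem hdec (by rw [hsumneg]; exact hαpos) fun i _ => hvC i
  have hqz : ∑ k ∈ Finset.Ico (M+1) (n+2), (g (k+1) - g k) • v k = -(α • z) := by
    have : ∑ k ∈ Finset.Ico (M+1) (n+2), -(g (k+1) - g k) • v k = α • z := by
      rw [hz, Finset.centerMass, hsumneg, smul_smul, mul_inv_cancel₀ (ne_of_gt hαpos), one_smul]
    rw [← this, ← Finset.sum_neg_distrib]
    refine Finset.sum_congr rfl fun k _ => ?_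
    rw [neg_smul, neg_neg]
  rw [hd, hsplit, hpy, hqz]
  have : α • y + -(α • z) = α • (y - z) := by
    rw [smul_sub]; abel
  rw [this, norm_smul, Real.norm_of_nonneg (le_of_lt hαpos)]
  have hdist : ‖y - z‖ ≤ Metric.diam C := by
    rw [← dist_eq_norm]
    exact Metric.dist_le_diam_of_mem hbd hyC hzC
  calc α * ‖y - z‖ ≤ α * Metric.diam C :=
        mul_le_mul_of_nonneg_left hdist (le_of_lt hαpos)
    _ = (n.choose ((n + 1) / 2) : ℝ) / 2 ^ (n+1) * Metric.diam C := by rw [hα, hM]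
end

section
/- Let C be a closed convex subset of a Banach space and T : C → C nonexpansive, α ∈ (0,1). Suppose the mapping F = (I − αT)^{−1}((1−α)I) is well-defined on C and there is a nonempty bounded set D ⊆ C with F(D) = D. Then T has a fixed point, and Fix F = Fix T. -/
open Function Set Filter Topology

/-- Let `C` be a closed convex subset of a Banach space, `T : C → C`
nonexpansive, `α ∈ (0,1)`, and `F = (I − αT)^{-1}((1−α)I)` the resolvent-type
map, i.e. `F x` is the unique point `y ∈ C` with `y = α • T y + (1-α) • x`.
If `F(D) = D` for some nonempty bounded `D ⊆ C`, then `T` has a fixed point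
and `Fix F = Fix T` on `C`. -/
theorem stmt19 {E : Type*} [NormedAddCommGroup E] [NormedSpace ℝ E]
    [CompleteSpace E] (C : Set E) (hcl : IsClosed C) (hconv : Convex ℝ C)
    (T : E → E) (hTC : Set.MapsTo T C C)
    (hne : ∀ x ∈ C, ∀ y ∈ C, ‖T x - T y‖ ≤ ‖x - y‖)
    (α : ℝ) (hα : α ∈ Set.Ioo (0 : ℝ) 1)
    (F : E → E)
    (hF : ∀ x ∈ C, F x ∈ C ∧ F x = α • T (F x) + (1 - α) • x)
    (D : Set E) (hDC : D ⊆ C) (hD : D.Nonempty)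
    (hDbd : Bornology.IsBounded D) (hFD : F '' D = D) :
    (∃ x ∈ C, T x = x) ∧ {x ∈ C | F x = x} = {x ∈ C | T x = x} := by
  obtain ⟨hα0, hα1⟩ := hα
  have hα1' : (0:ℝ) < 1 - α := by linarith
  have hαne : α ≠ 0 := ne_of_gt hα0
  -- Main claim: every point of D is a fixed point of T.
  have hDfix : ∀ x ∈ D, T x = x := by
    intro x hx
    by_contra hTx
    -- backward chain
    have hpre : ∀ z, z ∈ D → ∃ w, w ∈ D ∧ F w = z := by
      intro z hz
      rw [← hFD] at hz
      obtain ⟨w, hw1, hw2⟩ := hz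
      exact ⟨w, hw1, hw2⟩
    choose g hgD hgF using hpre
    obtain ⟨X, hX0, hXD, hXF⟩ : ∃ X : ℕ → E, X 0 = x ∧ (∀ n, X n ∈ D) ∧
        ∀ n, F (X (n + 1)) = X n := by
      let seq : ℕ → {z : E // z ∈ D} :=
        fun n => Nat.rec ⟨x, hx⟩ (fun _ p => ⟨g p.1 p.2, hgD p.1 p.2⟩) n
      exact ⟨fun n => (seq n).1, rfl, fun n => (seq n).2, fun n => hgF _ _⟩
    have hXC : ∀ n, X n ∈ C := fun n => hDC (hXD n)
    set a : ℕ → E := fun n => X (n + 1) - X n with ha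
    have hkey : ∀ n, X n = α • T (X n) + (1 - α) • X (n + 1) := by
      intro n
      have h := (hF (X (n + 1)) (hXC (n + 1))).2
      rw [hXF n] at h
      exact h
    -- key algebraic identity
    have hTsub : ∀ n, α • (T (X (n + 1)) - T (X n)) = a n - (1 - α) • a (n + 1) := by
      intro n
      have h1 := hkey n
      have h2 := hkey (n + 1)
      simp only [ha]
      linear_combination (norm := module) h1 - h2
    have hineq : ∀ n, ‖a n - (1 - α) • a (n + 1)‖ ≤ α * ‖a n‖ := by
      intro n
      rw [← hTsub n, norm_smul, Real.norm_eq_abs, abs_of_pos hα0]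
      have := hne (X (n + 1)) (hXC (n + 1)) (X n) (hXC n)
      exact mul_le_mul_of_nonneg_left this hα0.le
    -- monotone norms
    have hmono : ∀ n, ‖a n‖ ≤ ‖a (n + 1)‖ := by
      intro n
      have h1 := hineq n
      have h2 : ‖a n‖ - ‖(1 - α) • a (n + 1)‖ ≤ ‖a n - (1 - α) • a (n + 1)‖ :=
        norm_sub_norm_le _ _
      rw [norm_smul, Real.norm_eq_abs, abs_of_pos hα1'] at h2
      nlinarith [norm_nonneg (a n), norm_nonneg (a (n + 1))]
    -- bound
    obtain ⟨R, hR⟩ := Metric.isBounded_iff.mp hDbd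
    have hXdist : ∀ p q, ‖X p - X q‖ ≤ R := by
      intro p q
      rw [← dist_eq_norm]
      exact hR (hXD p) (hXD q)
    have hbdd : BddAbove (Set.range fun n => ‖a n‖) := by
      refine ⟨R, ?_⟩
      rintro r ⟨n, rfl⟩
      exact hXdist (n + 1) n
    set L : ℝ := ⨆ n, ‖a n‖ with hL
    have hLle : ∀ n, ‖a n‖ ≤ L := fun n => le_ciSup hbdd n
    have ha0 : a 0 ≠ 0 := by
      intro h0
      apply hTx
      have hk := hkey 0
      have hX1 : X 1 = X 0 := by
        have : X 1 - X 0 = 0 := h0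
        exact sub_eq_zero.mp this
      rw [hX1, hX0] at hk
      have : α • T x = α • x := by
        linear_combination (norm := module) -hk
      exact smul_right_injective E hαne this
    have hL0 : 0 < L := lt_of_lt_of_le (norm_pos_iff.mpr ha0) (hLle 0)
    -- pick m with m * L > R + 1
    obtain ⟨m, hm⟩ := exists_nat_gt ((R + 1) / L)
    have hmL : R + 1 < m * L := by
      rw [div_lt_iff₀ hL0] at hm
      exact hm
    have hpow : (0:ℝ) < (1 - α) ^ m := pow_pos hα1' m
    set ε : ℝ := min (L / 2) ((1 - α) ^ m / (m + 1)) with hε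
    have hε0 : 0 < ε := lt_min (by linarith) (div_pos hpow (by positivity))
    have hεL : ε ≤ L / 2 := min_le_left _ _
    have hεm : ε ≤ (1 - α) ^ m / (m + 1) := min_le_right _ _
    obtain ⟨n₀, hn₀⟩ : ∃ n₀, L - ε < ‖a n₀‖ := by
      apply exists_lt_of_lt_ciSup
      linarith
    have han₀ : a n₀ ≠ 0 := by
      intro h0
      rw [h0, norm_zero] at hn₀
      linarith
    obtain ⟨f, hf1, hf2⟩ := exists_dual_vector ℝ (a n₀) (norm_ne_zero_iff.mpr han₀)
    have hfle : ∀ z : E, f z ≤ ‖z‖ := by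
      intro z
      calc f z ≤ |f z| := le_abs_self _
        _ = ‖f z‖ := (Real.norm_eq_abs _).symm
        _ ≤ ‖f‖ * ‖z‖ := f.le_opNorm z
        _ = ‖z‖ := by rw [hf1, one_mul]
    -- induction
    have hind : ∀ k, L - f (a (n₀ + k)) ≤ ε / (1 - α) ^ k := by
      intro k
      induction k with
      | zero =>
        have hf2' : f (a n₀) = ‖a n₀‖ := by exact_mod_cast hf2
        simp only [pow_zero, div_one, Nat.add_zero]
        rw [hf2']
        linarith
      | succ k ih =>
        have hstep : f (a (n₀ + k)) - (1 - α) * f (a (n₀ + k + 1)) ≤ α * ‖a (n₀ + k)‖ := by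
          have h1 : f (a (n₀ + k) - (1 - α) • a (n₀ + k + 1)) ≤ α * ‖a (n₀ + k)‖ :=
            (hfle _).trans (hineq (n₀ + k))
          rwa [map_sub, map_smul, smul_eq_mul] at h1
        have hL' : ‖a (n₀ + k)‖ ≤ L := hLle _
        have h2 : (1 - α) * (L - f (a (n₀ + k + 1))) ≤ L - f (a (n₀ + k)) := by nlinarith
        have h3 : L - f (a (n₀ + k)) ≤ ε / (1 - α) ^ k := ih
        have hpk : (0:ℝ) < (1 - α) ^ k := pow_pos hα1' k
        rw [show n₀ + (k + 1) = n₀ + k + 1 from rfl]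
        rw [pow_succ]
        rw [le_div_iff₀ (by positivity)]
        calc (L - f (a (n₀ + k + 1))) * ((1 - α) ^ k * (1 - α))
            = ((1 - α) * (L - f (a (n₀ + k + 1)))) * (1 - α) ^ k := by ring
          _ ≤ (L - f (a (n₀ + k))) * (1 - α) ^ k := by
              apply mul_le_mul_of_nonneg_right _ hpk.le
              exact h2
          _ ≤ (ε / (1 - α) ^ k) * (1 - α) ^ k := by
              apply mul_le_mul_of_nonneg_right h3 hpk.le
          _ = ε := by field_simp
    -- summation
    have htel : ∑ k ∈ Finset.range m, a (n₀ + k) = X (n₀ + m) - X n₀ := by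
      have := Finset.sum_range_sub (fun k => X (n₀ + k)) m
      simp only [ha]
      rw [Finset.sum_sub_distrib]
      simpa [add_assoc] using this
    have hsum : f (X (n₀ + m) - X n₀) = ∑ k ∈ Finset.range m, f (a (n₀ + k)) := by
      rw [← htel, map_sum]
    have hterm : ∀ k < m, L - ε / (1 - α) ^ m ≤ f (a (n₀ + k)) := by
      intro k hk
      have h1 := hind k
      have h2 : (1 - α) ^ m ≤ (1 - α) ^ k :=
        pow_le_pow_of_le_one hα1'.le (by linarith) (le_of_lt hk)
      have h3 : ε / (1 - α) ^ k ≤ ε / (1 - α) ^ m := by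
        apply div_le_div_of_nonneg_left hε0.le hpow h2
      linarith
    have hlow : (m : ℝ) * (L - ε / (1 - α) ^ m) ≤ f (X (n₀ + m) - X n₀) := by
      rw [hsum]
      calc (m : ℝ) * (L - ε / (1 - α) ^ m)
          = ∑ _k ∈ Finset.range m, (L - ε / (1 - α) ^ m) := by
            rw [Finset.sum_const, Finset.card_range, nsmul_eq_mul]
        _ ≤ ∑ k ∈ Finset.range m, f (a (n₀ + k)) := by
            apply Finset.sum_le_sum
            intro k hk
            exact hterm k (Finset.mem_range.mp hk)
    have hup : f (X (n₀ + m) - X n₀) ≤ R := (hfle _).trans (hXdist _ _)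
    have hεbound : (m : ℝ) * (ε / (1 - α) ^ m) ≤ 1 := by
      have h1 : ε / (1 - α) ^ m ≤ 1 / (m + 1) := by
        rw [div_le_div_iff₀ hpow (by positivity)]
        calc ε * ((m : ℝ) + 1) ≤ ((1 - α) ^ m / (m + 1)) * ((m : ℝ) + 1) := by
              apply mul_le_mul_of_nonneg_right hεm (by positivity)
          _ = (1 - α) ^ m := by field_simp
          _ = 1 * (1 - α) ^ m := by ring
      have h2 : (m : ℝ) * (ε / (1 - α) ^ m) ≤ (m : ℝ) * (1 / (m + 1)) :=
        mul_le_mul_of_nonneg_left h1 (Nat.cast_nonneg m)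
      have h3 : (m : ℝ) * (1 / (m + 1)) ≤ 1 := by
        rw [mul_one_div, div_le_one (by positivity)]
        linarith
      linarith
    have : (m : ℝ) * L ≤ R + 1 := by nlinarith
    linarith
  obtain ⟨x₀, hx₀⟩ := hD
  constructor
  · exact ⟨x₀, hDC hx₀, hDfix x₀ hx₀⟩
  · ext z
    simp only [Set.mem_setOf_eq]
    constructor
    · rintro ⟨hzC, hFz⟩
      refine ⟨hzC, ?_⟩
      have h := (hF z hzC).2
      rw [hFz] at h
      have : α • T z = α • z := by
        have : α • T z + (1 - α) • z = (1:ℝ) • z := by rw [one_smul]; exact h.symm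
        linear_combination (norm := module) this
      exact smul_right_injective E hαne this
    · rintro ⟨hzC, hTz⟩
      refine ⟨hzC, ?_⟩
      obtain ⟨hFzC, hFz⟩ := hF z hzC
      have hdiff : F z - z = α • (T (F z) - T z) := by
        rw [hTz]
        linear_combination (norm := module) hFz
      have h1 : ‖F z - z‖ ≤ α * ‖F z - z‖ := by
        calc ‖F z - z‖ = α * ‖T (F z) - T z‖ := by
              rw [hdiff, norm_smul, Real.norm_eq_abs, abs_of_pos hα0]
          _ ≤ α * ‖F z - z‖ :=
              mul_le_mul_of_nonneg_left (hne (F z) hFzC z hzC) hα0.le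
      have h2 : ‖F z - z‖ = 0 := by nlinarith [norm_nonneg (F z - z)]
      have := norm_eq_zero.mp h2
      exact sub_eq_zero.mp this
end
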